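/- arXiv:1705.00944 — 12 statements merged into one kernel-verified Lean document; each statement's English description precedes it below -/
import Mathlib

section
/- Every fixed point (x, y, w) of the one-patch COD1 system with nonnegative coordinates and N = x + y + w > 0 is one of the following three points: (ζ, 0, 0), (0, 0, ζ), or (δξ, ξ, δξ), where δ is the unique positive root of P(X) = X³ + (1/2)X² − (1/4)X − β/8 and ξ = (b(δ + β/2) − d)/((2δ + 1)c). -/
set_option maxHeartbeats 1000000


/-- Every fixed point (x, y, w) of the one-patch COD1 system with
nonnegative coordinates and N = x + y + w > 0 is one of (ζ, 0, 0), (0, 0, ζ),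
or (δξ, ξ, δξ), where δ is the unique positive root of
P(X) = X³ + (1/2)X² − (1/4)X − β/8 and ξ = (b(δ + β/2) − d)/((2δ + 1)c). -/
theorem cod1_one_patch_fixed_points (b d c β : ℝ) (hdb : d < b) (hd : 0 < d) (hc : 0 < c)
    (hβ : 1 < β) (x y w : ℝ) (hx : 0 ≤ x) (hy : 0 ≤ y) (hw : 0 ≤ w) (hN : 0 < x + y + w)
    (heq1 : b / (x + y + w) * (β * x ^ 2 + ((β + 1) / 2) * x * y + (β / 4) * y ^ 2)
      - (d + c * (x + y + w)) * x = 0)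
    (heq2 : b / (x + y + w) * ((β / 2) * y ^ 2 + ((β + 1) / 2) * y * (x + w) + 2 * x * w)
      - (d + c * (x + y + w)) * y = 0)
    (heq3 : b / (x + y + w) * (β * w ^ 2 + ((β + 1) / 2) * w * y + (β / 4) * y ^ 2)
      - (d + c * (x + y + w)) * w = 0) :
    (x = (b * β - d) / c ∧ y = 0 ∧ w = 0) ∨
    (x = 0 ∧ y = 0 ∧ w = (b * β - d) / c) ∨
    (∃ δ : ℝ, 0 < δ ∧ δ ^ 3 + (1 / 2) * δ ^ 2 - (1 / 4) * δ - β / 8 = 0 ∧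
      x = δ * ((b * (δ + β / 2) - d) / ((2 * δ + 1) * c)) ∧
      y = (b * (δ + β / 2) - d) / ((2 * δ + 1) * c) ∧
      w = δ * ((b * (δ + β / 2) - d) / ((2 * δ + 1) * c))) := by
  have hN0 : x + y + w ≠ 0 := ne_of_gt hN
  have hb : 0 < b := hd.trans hdb
  have E1 : b * (β * x ^ 2 + ((β + 1) / 2) * x * y + (β / 4) * y ^ 2)
      = (d + c * (x + y + w)) * x * (x + y + w) := by
    field_simp at heq1; linarith
  have E2 : b * ((β / 2) * y ^ 2 + ((β + 1) / 2) * y * (x + w) + 2 * x * w)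
      = (d + c * (x + y + w)) * y * (x + y + w) := by
    field_simp at heq2; linarith
  have E3 : b * (β * w ^ 2 + ((β + 1) / 2) * w * y + (β / 4) * y ^ 2)
      = (d + c * (x + y + w)) * w * (x + y + w) := by
    field_simp at heq3; linarith
  rcases eq_or_lt_of_le hy with hy0 | hypos
  · -- y = 0
    have hy0 : y = 0 := hy0.symm
    subst hy0
    have hxw : x * w = 0 := by
      have h2 : b * (2 * (x * w)) = 0 := by linear_combination E2
      have := (mul_eq_zero.mp h2).resolve_left hb.ne'
      linarith
    rcases mul_eq_zero.mp hxw with hx0 | hw0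
    · subst hx0
      have hwpos : 0 < w := by linarith
      right; left
      refine ⟨rfl, rfl, ?_⟩
      have h3 : (b * β - d - c * w) * w ^ 2 = 0 := by linear_combination E3
      have h4 : b * β - d - c * w = 0 :=
        (mul_eq_zero.mp h3).resolve_right (pow_ne_zero 2 hwpos.ne')
      field_simp
      linarith
    · subst hw0
      have hxpos : 0 < x := by linarith
      left
      refine ⟨?_, rfl, rfl⟩
      have h3 : (b * β - d - c * x) * x ^ 2 = 0 := by linear_combination E1
      have h4 : b * β - d - c * x = 0 :=
        (mul_eq_zero.mp h3).resolve_right (pow_ne_zero 2 hxpos.ne')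
      field_simp
      linarith
  · -- y > 0
    have hy0 : y ≠ 0 := hypos.ne'
    have hfac : b * ((x - w) * (β * (x * w) - β / 4 * y ^ 2)) = 0 := by
      linear_combination w * E1 - x * E3
    have hfac2 : (x - w) * (β * (x * w) - β / 4 * y ^ 2) = 0 :=
      (mul_eq_zero.mp hfac).resolve_left hb.ne'
    have hGb : b * (β * x ^ 2 * y + ((β + 1) / 2) * x * y ^ 2 + (β / 4) * y ^ 3
        - (β / 2) * x * y ^ 2 - ((β + 1) / 2) * x * y * (x + w) - 2 * x ^ 2 * w) = 0 := by
      linear_combination y * E1 - x * E2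
    have hG : β * x ^ 2 * y + ((β + 1) / 2) * x * y ^ 2 + (β / 4) * y ^ 3
        - (β / 2) * x * y ^ 2 - ((β + 1) / 2) * x * y * (x + w) - 2 * x ^ 2 * w = 0 :=
      (mul_eq_zero.mp hGb).resolve_left hb.ne'
    rcases mul_eq_zero.mp hfac2 with hxw | hHWβ
    · -- x = w branch: interior equilibrium
      have hwx : w = x := by linarith
      have hcube : x ^ 3 + (1 / 2) * x ^ 2 * y - (1 / 4) * x * y ^ 2 - (β / 8) * y ^ 3 = 0 := by
        linear_combination (-1 / 2) * hG - (((β + 1) / 4) * x * y + x ^ 2) * hwx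
      have hxpos : 0 < x := by
        rcases hx.lt_or_eq with h | h
        · exact h
        · exfalso
          have h5 : (β / 8) * y ^ 3 = 0 := by
            linear_combination (-1 : ℝ) * hcube - (x ^ 2 + (1 / 2) * x * y - (1 / 4) * y ^ 2) * h
          have h6 : 0 < (β / 8) * y ^ 3 :=
            mul_pos (by linarith) (pow_pos hypos 3)
          linarith
      set δ : ℝ := x / y with hδdef
      have hδpos : 0 < δ := div_pos hxpos hypos
      have hden0 : 0 < (2 * δ + 1) * c := by
        have : (0:ℝ) < 2 * δ + 1 := by linarith
        exact mul_pos this hc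
      have hcubic : δ ^ 3 + (1 / 2) * δ ^ 2 - (1 / 4) * δ - β / 8 = 0 := by
        rw [hδdef]
        field_simp
        linear_combination 64 * hcube
      have hkeyN : b * (x + (β / 2) * y) * (x + y + x)
          = (d + c * (x + y + x)) * y * (x + y + x) := by
        linear_combination E2 + ((d + c * (x + y + w)) * y - b * ((β + 1) / 2 * y + 2 * x)
          + (d * y + c * (x + y + w) * y + c * y * (x + y + x))) * hwx
          - (y * d + y * c * (x + w) + c * y ^ 2) * hwx
      have hNx : x + y + x ≠ 0 := ne_of_gt (by linarith)
      have hkey : b * (x + (β / 2) * y) = (d + c * (x + y + x)) * y :=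
        mul_right_cancel₀ hNx hkeyN
      have hyval : y = (b * (δ + β / 2) - d) / ((2 * δ + 1) * c) := by
        rw [eq_div_iff hden0.ne', hδdef]
        have h6 : (y * ((2 * (x / y) + 1) * c)) * y = (b * (x / y + β / 2) - d) * y := by
          field_simp
          linear_combination (-2) * hkey
        exact mul_right_cancel₀ hy0 h6
      refine Or.inr (Or.inr ⟨δ, hδpos, hcubic, ?_, hyval, ?_⟩)
      · rw [← hyval, hδdef]
        exact (div_mul_cancel₀ x hy0).symm
      · rw [hwx, ← hyval, hδdef]
        exact (div_mul_cancel₀ x hy0).symm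
    · -- Hardy-Weinberg branch: contradiction with β > 1
      exfalso
      have hβ0 : β ≠ 0 := by positivity
      have hHW : x * w - y ^ 2 / 4 = 0 := by
        have h2 : β * (x * w - y ^ 2 / 4) = 0 := by linear_combination hHWβ
        have h3 := (mul_eq_zero.mp h2).resolve_left hβ0
        linarith
      have hxpos : 0 < x := by
        rcases hx.lt_or_eq with h | h
        · exact h
        · exfalso
          have h5 : y ^ 2 / 4 = 0 := by linear_combination (-1 : ℝ) * hHW - w * h
          have h6 : 0 < y ^ 2 / 4 := by positivity
          linarith
      have hfin : (β - 1) / 2 * (x * y * (x + w)) = 0 := by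
        linear_combination hG + (β * y + 2 * x) * hHW
      have hpos : 0 < (β - 1) / 2 * (x * y * (x + w)) := by
        have hxw0 : 0 < x + w := by linarith
        have h1 : 0 < x * y * (x + w) := by positivity
        nlinarith
      linarith
end

section
/- Let z = (x, y, w) : [0, ∞) → (0, ∞)³ be a global solution of the one-patch COD1 system. If x(0) > w(0), then z(t) converges to (ζ, 0, 0) as t → ∞. -/
open Filter Set

/-- Barrier lemma: if `v < c` initially and the vector field points strictly down
whenever `v = c`, then `v < c` forever. -/
lemma barrier_lt {v V : ℝ → ℝ} {a c : ℝ}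
    (hd : ∀ t, a ≤ t → HasDerivAt v (V t) t)
    (hbar : ∀ t, a ≤ t → v t = c → V t < 0)
    (h0 : v a < c) : ∀ t, a ≤ t → v t < c := by
  intro t ht
  by_contra hcon
  push_neg at hcon
  have hcont : ContinuousOn v (Set.Icc a t) := fun s hs =>
    ((hd s hs.1).continuousAt).continuousWithinAt
  set S : Set ℝ := Set.Icc a t ∩ v ⁻¹' Set.Ici c with hS
  have hSne : S.Nonempty := ⟨t, ⟨⟨ht, le_refl t⟩, hcon⟩⟩
  have hSbdd : BddBelow S := ⟨a, fun s hs => hs.1.1⟩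
  have hSclosed : IsClosed S :=
    hcont.preimage_isClosed_of_isClosed isClosed_Icc isClosed_Ici
  set t₀ := sInf S with ht₀def
  have ht₀S : t₀ ∈ S := hSclosed.csInf_mem hSne hSbdd
  have ht₀a : a ≤ t₀ := ht₀S.1.1
  have hat₀ : a < t₀ := by
    rcases lt_or_eq_of_le ht₀a with h | h
    · exact h
    · exfalso; rw [← h] at ht₀S; exact absurd ht₀S.2 (not_le.mpr h0)
  have hbefore : ∀ s, a ≤ s → s < t₀ → v s < c := by
    intro s hs hst
    by_contra hc2
    push_neg at hc2
    have : s ∈ S := ⟨⟨hs, le_trans hst.le ht₀S.1.2⟩, hc2⟩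
    exact absurd (csInf_le hSbdd this) (not_le.mpr hst)
  have hvt₀ : v t₀ = c := by
    refine le_antisymm ?_ ht₀S.2
    have htend : Filter.Tendsto v (nhdsWithin t₀ (Set.Iio t₀)) (nhds (v t₀)) :=
      ((hd t₀ ht₀a).continuousAt).continuousWithinAt.tendsto
    refine le_of_tendsto htend ?_
    filter_upwards [Ioo_mem_nhdsLT_of_mem (⟨hat₀, le_refl t₀⟩ : t₀ ∈ Set.Ioc a t₀)]
      with s hs
    exact (hbefore s hs.1.le hs.2).le
  have hV : V t₀ < 0 := hbar t₀ ht₀a hvt₀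
  have hslope := hd t₀ ht₀a
  rw [hasDerivAt_iff_tendsto_slope] at hslope
  have hslope' : Filter.Tendsto (slope v t₀) (nhdsWithin t₀ (Set.Iio t₀)) (nhds (V t₀)) :=
    hslope.mono_left (nhdsWithin_mono _ (fun s hs => ne_of_lt hs))
  have hev : ∀ᶠ s in nhdsWithin t₀ (Set.Iio t₀), slope v t₀ s < 0 :=
    hslope'.eventually_lt_const hV
  have hev2 : ∀ᶠ s in nhdsWithin t₀ (Set.Iio t₀), s ∈ Set.Ioo a t₀ :=
    Ioo_mem_nhdsLT_of_mem (⟨hat₀, le_refl t₀⟩ : t₀ ∈ Set.Ioc a t₀)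
  obtain ⟨s, hs1, hs2⟩ := (hev.and hev2).exists
  rw [slope_def_field] at hs1
  have hnum : 0 < v s - v t₀ := by
    by_contra hnn
    push_neg at hnn
    have h2 : s - t₀ ≤ 0 := by linarith [hs2.2]
    have : (0:ℝ) ≤ (v s - v t₀) / (s - t₀) := div_nonneg_of_nonpos hnn h2
    linarith
  have : v s < c := hbefore s hs2.1.le hs2.2
  rw [hvt₀] at hnum
  linarith

/-- If the derivative is at most `-κ` whenever `v ≥ c`, then eventually `v < c` forever. -/
lemma eventually_lt_of_deriv {v V : ℝ → ℝ} {a c κ : ℝ} (hκ : 0 < κ)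
    (hd : ∀ t, a ≤ t → HasDerivAt v (V t) t)
    (hdec : ∀ t, a ≤ t → c ≤ v t → V t ≤ -κ) :
    ∃ T, a ≤ T ∧ ∀ t, T ≤ t → v t < c := by
  have key : ∃ t₁, a ≤ t₁ ∧ v t₁ < c := by
    by_contra h
    push_neg at h
    have hg : ∀ t, a ≤ t → HasDerivAt (fun s => v s + κ * s) (V t + κ) t := fun t ht =>
      (hd t ht).add (by simpa using (hasDerivAt_id t).const_mul κ)
    have hcont : ContinuousOn (fun s => v s + κ * s) (Set.Ici a) := fun s hs =>
      ((hg s hs).continuousAt).continuousWithinAt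
    have hderiv : ∀ s ∈ interior (Set.Ici a), deriv (fun s => v s + κ * s) s ≤ 0 := by
      intro s hs
      rw [interior_Ici] at hs
      rw [(hg s (le_of_lt hs)).deriv]
      have := hdec s (le_of_lt hs) (h s (le_of_lt hs))
      linarith
    have anti : AntitoneOn (fun s => v s + κ * s) (Set.Ici a) := by
      apply antitoneOn_of_deriv_nonpos (convex_Ici a) hcont ?_ hderiv
      intro s hs
      rw [interior_Ici] at hs
      exact ((hg s (le_of_lt hs)).differentiableAt).differentiableWithinAt
    set t₂ := a + (v a - c) / κ + 1 with ht₂def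
    have hva : c ≤ v a := h a (le_refl a)
    have hdiv : 0 ≤ (v a - c) / κ := div_nonneg (by linarith) hκ.le
    have ht₂a : a ≤ t₂ := by rw [ht₂def]; linarith
    have hanti := anti (Set.self_mem_Ici) ht₂a ht₂a
    have hanti' : v t₂ + κ * t₂ ≤ v a + κ * a := hanti
    have hκt : κ * (t₂ - a) = (v a - c) + κ := by
      rw [ht₂def]; field_simp; ring
    have : v t₂ < c := by nlinarith
    exact absurd this (not_lt.mpr (h t₂ ht₂a))
  obtain ⟨t₁, ht₁a, ht₁⟩ := key
  refine ⟨t₁, ht₁a, barrier_lt (fun t ht => hd t (le_trans ht₁a ht))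
    (fun t ht hv => lt_of_le_of_lt (hdec t (le_trans ht₁a ht) (le_of_eq hv.symm)) (by linarith))
    ht₁⟩

lemma barrier_gt {v V : ℝ → ℝ} {a c : ℝ}
    (hd : ∀ t, a ≤ t → HasDerivAt v (V t) t)
    (hbar : ∀ t, a ≤ t → v t = c → 0 < V t)
    (h0 : c < v a) : ∀ t, a ≤ t → c < v t := by
  have := barrier_lt (v := fun t => -(v t)) (V := fun t => -(V t)) (a := a) (c := -c)
    (fun t ht => (hd t ht).neg)
    (fun t ht hv => by
      have hv' : -(v t) = -c := hv
      have : v t = c := by linarith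
      have := hbar t ht this
      show -(V t) < 0
      linarith)
    (by show -(v a) < -c; linarith)
  intro t ht
  have h2 : -(v t) < -c := this t ht
  linarith

lemma eventually_gt_of_deriv {v V : ℝ → ℝ} {a c κ : ℝ} (hκ : 0 < κ)
    (hd : ∀ t, a ≤ t → HasDerivAt v (V t) t)
    (hinc : ∀ t, a ≤ t → v t ≤ c → κ ≤ V t) :
    ∃ T, a ≤ T ∧ ∀ t, T ≤ t → c < v t := by
  obtain ⟨T, hTa, hT⟩ := eventually_lt_of_deriv (v := fun t => -(v t)) (V := fun t => -(V t))
    (a := a) (c := -c) hκ (fun t ht => (hd t ht).neg)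
    (fun t ht hv => by
      have hv' : -c ≤ -(v t) := hv
      have : v t ≤ c := by linarith
      have := hinc t ht this
      show -(V t) ≤ -κ
      linarith)
  refine ⟨T, hTa, fun t ht => ?_⟩
  have h2 : -(v t) < -c := hT t ht
  linarith

/-- Sign preservation for a scalar linear ODE `u' = g u` with continuous `g`. -/
lemma pos_of_linear_ode {u g : ℝ → ℝ}
    (hg : ContinuousOn g (Set.Ici 0))
    (hu : ∀ t, 0 ≤ t → HasDerivAt u (g t * u t) t)
    (h0 : 0 < u 0) : ∀ t, 0 ≤ t → 0 < u t := by
  by_contra h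
  push_neg at h
  obtain ⟨t₁, ht₁, hle⟩ := h
  have hcont : ContinuousOn u (Set.Icc 0 t₁) := fun s hs =>
    ((hu s hs.1).continuousAt).continuousWithinAt
  have hmem : (0:ℝ) ∈ Set.Icc (u t₁) (u 0) := ⟨hle, h0.le⟩
  obtain ⟨t₂, ht₂mem, ht₂⟩ := intermediate_value_Icc' ht₁ hcont hmem
  -- u t₂ = 0, t₂ ∈ [0, t₁]
  obtain ⟨K, hK⟩ := (isCompact_Icc (a := (0:ℝ)) (b := t₂)).exists_bound_of_continuousOn
    (hg.mono (fun s hs => hs.1))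
  set f : ℝ → ℝ := fun s => u (t₂ - s) with hfdef
  have hfc : ContinuousOn f (Set.Icc 0 t₂) := by
    intro s hs
    have h1 : (0:ℝ) ≤ t₂ - s := by linarith [hs.2]
    exact (((hu (t₂ - s) h1).continuousAt).comp
      (continuousAt_const.sub continuousAt_id)).continuousWithinAt
  have hf' : ∀ s ∈ Set.Ico 0 t₂, HasDerivWithinAt f
      (-(g (t₂ - s) * u (t₂ - s))) (Set.Ici s) s := by
    intro s hs
    have h1 : (0:ℝ) ≤ t₂ - s := by linarith [hs.2]
    have hinner : HasDerivAt (fun s : ℝ => t₂ - s) (-1) s := by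
      simpa using (hasDerivAt_id s).const_sub t₂
    have := (hu (t₂ - s) h1).comp s hinner
    have h2 := this.hasDerivWithinAt (s := Set.Ici s)
    rw [show -(g (t₂ - s) * u (t₂ - s)) = g (t₂ - s) * u (t₂ - s) * (-1) by ring]
    exact h2
  have hbound : ∀ s ∈ Set.Ico 0 t₂,
      ‖-(g (t₂ - s) * u (t₂ - s))‖ ≤ K * ‖f s‖ + 0 := by
    intro s hs
    have h1 : t₂ - s ∈ Set.Icc 0 t₂ := ⟨by linarith [hs.2], by linarith [hs.1]⟩
    have := hK (t₂ - s) h1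
    rw [norm_neg, norm_mul, add_zero]
    exact mul_le_mul_of_nonneg_right this (norm_nonneg _)
  have hfa : ‖f 0‖ ≤ 0 := by simp [hfdef, ht₂]
  have := norm_le_gronwallBound_of_norm_deriv_right_le hfc hf' hfa hbound t₂
    ⟨ht₂mem.1, le_refl t₂⟩
  rw [gronwallBound_ε0] at this
  simp [hfdef] at this
  linarith
set_option maxHeartbeats 4000000 in
/-- Let z = (x, y, w) : [0, ∞) → (0, ∞)³ be a global solution of
the one-patch COD1 system. If x(0) > w(0), then z(t) → (ζ, 0, 0) as t → ∞. -/
theorem cod1_one_patch_convergence_A (b d c β : ℝ) (hdb : d < b) (hd : 0 < d) (hc : 0 < c)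
    (hβ : 1 < β) (x y w : ℝ → ℝ)
    (hpos : ∀ t : ℝ, 0 ≤ t → 0 < x t ∧ 0 < y t ∧ 0 < w t)
    (hx : ∀ t : ℝ, 0 ≤ t → HasDerivAt x
      (b / (x t + y t + w t) * (β * (x t) ^ 2 + ((β + 1) / 2) * x t * y t + (β / 4) * (y t) ^ 2)
        - (d + c * (x t + y t + w t)) * x t) t)
    (hy : ∀ t : ℝ, 0 ≤ t → HasDerivAt y
      (b / (x t + y t + w t) * ((β / 2) * (y t) ^ 2 + ((β + 1) / 2) * y t * (x t + w t)
          + 2 * x t * w t)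
        - (d + c * (x t + y t + w t)) * y t) t)
    (hw : ∀ t : ℝ, 0 ≤ t → HasDerivAt w
      (b / (x t + y t + w t) * (β * (w t) ^ 2 + ((β + 1) / 2) * w t * y t + (β / 4) * (y t) ^ 2)
        - (d + c * (x t + y t + w t)) * w t) t)
    (h0 : w 0 < x 0) :
    Tendsto (fun t => (x t, y t, w t)) atTop (nhds (((b * β - d) / c, 0, 0) : ℝ × ℝ × ℝ)) := by
  have hb : 0 < b := hd.trans hdb
  have hD : (0:ℝ) < β - 1 := by linarith
  have hN : ∀ t, 0 ≤ t → 0 < x t + y t + w t := fun t ht => by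
    obtain ⟨px, py, pw⟩ := hpos t ht; linarith
  -- continuity of the solution on [0,∞)
  have hcx : ContinuousOn x (Set.Ici 0) := fun s hs => ((hx s hs).continuousAt).continuousWithinAt
  have hcy : ContinuousOn y (Set.Ici 0) := fun s hs => ((hy s hs).continuousAt).continuousWithinAt
  have hcw : ContinuousOn w (Set.Ici 0) := fun s hs => ((hw s hs).continuousAt).continuousWithinAt
  -- Step 1 : w < x forever
  have hxw : ∀ t, 0 ≤ t → w t < x t := by
    have hcN : ContinuousOn (fun t => x t + y t + w t) (Set.Ici 0) := (hcx.add hcy).add hcw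
    have hgc : ContinuousOn
        (fun t => b / (x t + y t + w t) * (β * (x t + w t) + ((β + 1) / 2) * y t)
          - (d + c * (x t + y t + w t))) (Set.Ici 0) := by
      apply ContinuousOn.sub
      · exact (continuousOn_const.div hcN (fun s hs => (hN s hs).ne')).mul
          ((continuousOn_const.mul (hcx.add hcw)).add (continuousOn_const.mul hcy))
      · exact continuousOn_const.add (continuousOn_const.mul hcN)
    have key := pos_of_linear_ode hgc (fun t ht => by
      have h1 := (hx t ht).sub (hw t ht)
      refine h1.congr_deriv ?_
      rw [Pi.sub_apply]
      obtain ⟨px, py, pw⟩ := hpos t ht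
      have hNne : x t + y t + w t ≠ 0 := (hN t ht).ne'
      field_simp
      ring) (by linarith : 0 < x 0 - w 0)
    exact fun t ht => by linarith [key t ht, Pi.sub_apply x w t]
  -- derivative of ρ = y/x
  have hρd : ∀ t, 0 ≤ t → HasDerivAt (fun s => y s / x s)
      (b * ((β/2) * x t * (y t)^2 + ((β+1)/2) * (x t + w t) * x t * y t + 2 * (x t)^2 * w t
        - β * (x t)^2 * y t - ((β+1)/2) * x t * (y t)^2 - (β/4) * (y t)^3)
        / ((x t + y t + w t) * (x t)^2)) t := by
    intro t ht
    obtain ⟨px, py, pw⟩ := hpos t ht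
    have h1 := (hy t ht).div (hx t ht) px.ne'
    refine h1.congr_deriv ?_
    have hNne : x t + y t + w t ≠ 0 := (hN t ht).ne'
    field_simp
    ring
  -- derivative of r = w/x
  have hrd : ∀ t, 0 ≤ t → HasDerivAt (fun s => w s / x s)
      (b * β * (x t - w t) * ((y t)^2 - 4 * x t * w t) / (4 * (x t + y t + w t) * (x t)^2)) t := by
    intro t ht
    obtain ⟨px, py, pw⟩ := hpos t ht
    have h1 := (hw t ht).div (hx t ht) px.ne'
    refine h1.congr_deriv ?_
    have hNne : x t + y t + w t ≠ 0 := (hN t ht).ne'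
    field_simp
    ring
  -- derivative of σ = y²/(xw)
  have hσd : ∀ t, 0 ≤ t → HasDerivAt (fun s => (y s)^2 / (x s * w s))
      (b * y t * (x t * w t * y t * (x t + w t) - x t * w t * (y t)^2 + 4 * (x t)^2 * (w t)^2
        - (β/4) * (y t)^3 * (x t + w t)) / ((x t + y t + w t) * (x t)^2 * (w t)^2)) t := by
    intro t ht
    obtain ⟨px, py, pw⟩ := hpos t ht
    have h1 := ((hy t ht).pow 2).div ((hx t ht).mul (hw t ht)) (mul_pos px pw).ne'
    refine h1.congr_deriv ?_
    simp only [Pi.mul_apply, Pi.pow_apply, Nat.cast_ofNat]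
    have hNne : x t + y t + w t ≠ 0 := (hN t ht).ne'
    field_simp
    ring
  -- derivative of N
  have hNd : ∀ t, 0 ≤ t → HasDerivAt (fun s => x s + y s + w s)
      ((b / (x t + y t + w t) * (β * (x t) ^ 2 + ((β + 1) / 2) * x t * y t + (β / 4) * (y t) ^ 2)
        - (d + c * (x t + y t + w t)) * x t
       + (b / (x t + y t + w t) * ((β / 2) * (y t) ^ 2 + ((β + 1) / 2) * y t * (x t + w t)
          + 2 * x t * w t) - (d + c * (x t + y t + w t)) * y t))
       + (b / (x t + y t + w t) * (β * (w t) ^ 2 + ((β + 1) / 2) * w t * y t + (β / 4) * (y t) ^ 2)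
        - (d + c * (x t + y t + w t)) * w t)) t :=
    fun t ht => ((hx t ht).add (hy t ht)).add (hw t ht)
  -- the small constant ε
  have hε8 : (0:ℝ) < β + 8 := by linarith
  set ε := min 1 (2*(β-1)/(β+8)) with hεdef
  have hε0 : 0 < ε := lt_min one_pos (by positivity)
  have hε1 : ε ≤ 1 := min_le_left _ _
  have hεβ : ε * (β + 8) ≤ 2 * (β - 1) := by
    have h := min_le_right 1 (2*(β-1)/(β+8))
    have h2 : ε * (β+8) ≤ (2*(β-1)/(β+8)) * (β+8) :=
      mul_le_mul_of_nonneg_right h hε8.le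
    calc ε * (β+8) ≤ (2*(β-1)/(β+8)) * (β+8) := h2
    _ = 2*(β-1) := by field_simp
  clear_value ε
  -- Step 2 : eventually y < 6 x
  obtain ⟨T₁, hT₁0, hT₁⟩ := eventually_lt_of_deriv (a := (0:ℝ)) (c := 6) hb hρd (by
    intro t ht h6
    obtain ⟨px, py, pw⟩ := hpos t ht
    have hNt := hN t ht
    have h6' : 6 * x t ≤ y t := (le_div_iff₀ px).mp h6
    have hwx := hxw t ht
    rw [div_le_iff₀ (by positivity)]
    set X := x t with hX; set Y := y t with hY; set W := w t with hW
    have key : (β/2) * X * Y^2 + ((β+1)/2) * (X + W) * X * Y + 2 * X^2 * W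
        - β * X^2 * Y - ((β+1)/2) * X * Y^2 - (β/4) * Y^3 + (X + Y + W) * X^2 ≤ 0 := by
      nlinarith [mul_nonneg (mul_nonneg py.le (sub_nonneg.2 h6')) (by linarith : (0:ℝ) ≤ Y + 6*X),
        mul_nonneg (mul_nonneg px.le py.le) (sub_nonneg.2 h6'),
        mul_nonneg (mul_nonneg (sub_nonneg.2 hwx.le) px.le) py.le,
        mul_nonneg (mul_pos px px).le (sub_nonneg.2 hwx.le),
        mul_pos (mul_pos px px) py, mul_pos px py, hβ]
    linarith [mul_le_mul_of_nonneg_left key hb.le])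
  -- Step 3 : eventually σ = y²/(xw) < 4 - ε
  have hσκ : 0 < 3*b*(β-1)/16 := by positivity
  obtain ⟨T₂, hT₂a, hT₂⟩ := eventually_lt_of_deriv (a := T₁) (c := 4 - ε) hσκ
    (fun t ht => hσd t (hT₁0.trans ht)) (by
    intro t ht hσ
    have ht0 : (0:ℝ) ≤ t := hT₁0.trans ht
    obtain ⟨px, py, pw⟩ := hpos t ht0
    have hNt := hN t ht0
    have hwx := hxw t ht0
    have h6 : y t < 6 * x t := by
      have := hT₁ t ht
      rwa [div_lt_iff₀ px] at this
    set X := x t with hX; set Y := y t with hY; set W := w t with hW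
    have hxwpos : 0 < X * W := mul_pos px pw
    have h4ε : (4 - ε) * (X * W) ≤ Y^2 := (le_div_iff₀ hxwpos).mp hσ
    have h12 : 12 * (X * W) ≤ (3 + ε) * Y^2 := by
      nlinarith [mul_le_mul_of_nonneg_left h4ε (by linarith : (0:ℝ) ≤ 3 + ε),
        mul_nonneg (mul_nonneg hε0.le (by linarith : (0:ℝ) ≤ 1 - ε)) hxwpos.le]
    have h1 : 4 * X * W / Y ≤ Y + ε * Y / 3 := by
      rw [div_le_iff₀ py]
      nlinarith [h12]
    have h2 : (β/4) * (4 - ε) * (X + W) ≤ (β/4) * Y^2 * (X + W) / (X * W) := by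
      have e1 : (β/4) * Y^2 * (X + W) / (X * W) = ((β/4) * (X + W)) * (Y^2 / (X * W)) := by
        ring
      have e2 : (β/4) * (4 - ε) * (X + W) = ((β/4) * (X + W)) * (4 - ε) := by ring
      rw [e1, e2]
      exact mul_le_mul_of_nonneg_left hσ (by positivity)
    have hΦ : (X + W) - Y + 4 * X * W / Y - (β/4) * Y^2 * (X + W) / (X * W)
        ≤ -((β-1)/2) * X := by
      have hD1 : (X + W) - (β/4)*(4-ε)*(X + W) = (X + W) * (1 - β + β*ε/4) := by ring
      have hA : (X + W) * (1 - β + β*ε/4) ≤ (X + W) * (-((β-1)/2) - 2*ε) :=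
        mul_le_mul_of_nonneg_left (by nlinarith [hεβ]) (by linarith)
      have hB : (X + W) * (-((β-1)/2) - 2*ε) ≤ X * (-((β-1)/2) - 2*ε) :=
        mul_le_mul_of_nonpos_right (by linarith) (by linarith)
      have hE : X * (-((β-1)/2) - 2*ε) = -((β-1)/2) * X - 2*(ε * X) := by ring
      have hC : ε * Y / 3 ≤ 2 * (ε * X) := by nlinarith [hε0, h6]
      linarith [h1, h2, hD1, hA, hB, hC, hE]
    have hVeq : b * Y * (X * W * Y * (X + W) - X * W * Y^2 + 4 * X^2 * W^2
        - (β/4) * Y^3 * (X + W)) / ((X + Y + W) * X^2 * W^2)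
        = (Y^2 / (X * W)) * ((b / (X + Y + W)) * ((X + W) - Y
          + 4 * X * W / Y - (β/4) * Y^2 * (X + W) / (X * W))) := by
      field_simp
    rw [hVeq]
    have hbN : 0 < b / (X + Y + W) := by positivity
    have hΦneg : (X + W) - Y + 4 * X * W / Y - (β/4) * Y^2 * (X + W) / (X * W) ≤ 0 :=
      le_trans hΦ (by nlinarith)
    have hCnp : (b / (X + Y + W)) * ((X + W) - Y + 4 * X * W / Y
        - (β/4) * Y^2 * (X + W) / (X * W)) ≤ 0 := by
      have := mul_le_mul_of_nonneg_left hΦneg hbN.le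
      linarith
    have hσt3 : (3:ℝ) ≤ Y^2 / (X * W) := le_trans (by linarith) hσ
    have hs1 : (Y^2 / (X * W)) * ((b / (X + Y + W)) * ((X + W) - Y + 4 * X * W / Y
        - (β/4) * Y^2 * (X + W) / (X * W)))
        ≤ 3 * ((b / (X + Y + W)) * ((X + W) - Y + 4 * X * W / Y
        - (β/4) * Y^2 * (X + W) / (X * W))) :=
      mul_le_mul_of_nonpos_right hσt3 hCnp
    have hs2 : 3 * ((b / (X + Y + W)) * ((X + W) - Y + 4 * X * W / Y
        - (β/4) * Y^2 * (X + W) / (X * W)))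
        ≤ 3 * ((b / (X + Y + W)) * (-((β-1)/2) * X)) := by
      have := mul_le_mul_of_nonneg_left hΦ hbN.le
      linarith
    have hxN : (1:ℝ)/8 ≤ X / (X + Y + W) := by
      rw [le_div_iff₀ hNt]
      linarith
    have hend : 3 * ((b / (X + Y + W)) * (-((β-1)/2) * X))
        = -(3*b*(β-1)/2) * (X / (X + Y + W)) := by ring
    have hK : (0:ℝ) ≤ 3*b*(β-1)/2 := by positivity
    have hfin : -(3*b*(β-1)/2) * (X / (X + Y + W)) ≤ -(3*b*(β-1)/16) := by
      nlinarith [mul_le_mul_of_nonneg_left hxN hK]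
    linarith [hs1, hs2, hend, hfin])
  -- Step 4 : control of r = w/x beyond time T₂
  have hT₂0 : (0:ℝ) ≤ T₂ := hT₁0.trans hT₂a
  set r₀ := (1 + w T₂ / x T₂) / 2 with hr₀def
  have hr₀1 : r₀ < 1 := by
    obtain ⟨px2, py2, pw2⟩ := hpos T₂ hT₂0
    have : w T₂ / x T₂ < 1 := (div_lt_one px2).mpr (hxw T₂ hT₂0)
    rw [hr₀def]; linarith
  have hr₀half : (1:ℝ)/2 ≤ r₀ := by
    obtain ⟨px2, py2, pw2⟩ := hpos T₂ hT₂0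
    have : 0 < w T₂ / x T₂ := div_pos pw2 px2
    rw [hr₀def]; linarith
  have hrT₂ : w T₂ / x T₂ < r₀ := by
    obtain ⟨px2, py2, pw2⟩ := hpos T₂ hT₂0
    have : w T₂ / x T₂ < 1 := (div_lt_one px2).mpr (hxw T₂ hT₂0)
    rw [hr₀def]; linarith
  clear_value r₀
  -- the main decay estimate for r
  have hrineq : ∀ t, T₂ ≤ t → ∀ δ : ℝ, 0 < δ → δ ≤ w t / x t → w t / x t ≤ r₀ →
      b * β * (x t - w t) * ((y t)^2 - 4 * x t * w t) / (4 * (x t + y t + w t) * (x t)^2)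
        ≤ -(b * β * ε * δ * (1 - r₀) / 32) := by
    intro t ht δ hδ0 hδr hrr₀
    have ht0 : (0:ℝ) ≤ t := hT₂0.trans ht
    obtain ⟨px, py, pw⟩ := hpos t ht0
    have hNt := hN t ht0
    have hwx := hxw t ht0
    have h6 : y t < 6 * x t := by
      have := hT₁ t (hT₂a.trans ht)
      rwa [div_lt_iff₀ px] at this
    have hσt : (y t)^2 / (x t * w t) < 4 - ε := hT₂ t ht
    set X := x t with hX; set Y := y t with hY; set W := w t with hW
    have hxwpos : 0 < X * W := mul_pos px pw
    have hσ' : Y^2 < (4 - ε) * (X * W) := (div_lt_iff₀ hxwpos).mp hσt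
    have hδx : δ * X ≤ W := (le_div_iff₀ px).mp hδr
    have hr0x : W ≤ r₀ * X := (div_le_iff₀ px).mp hrr₀
    have hN8 : X + Y + W ≤ 8 * X := by linarith
    rw [div_le_iff₀ (by positivity)]
    have h1 : Y^2 - 4 * (X * W) ≤ -(ε * (X * W)) := by nlinarith
    have k1 : (X - W) * (Y^2 - 4 * (X * W)) ≤ (X - W) * (-(ε * (X * W))) :=
      mul_le_mul_of_nonneg_left h1 (by linarith)
    have kB : X * (δ * X) ≤ X * W := mul_le_mul_of_nonneg_left hδx px.le
    have k5 : ((1 - r₀) * X) * (X * (δ * X)) ≤ (X - W) * (X * W) := by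
      apply mul_le_mul (by linarith) kB (by positivity) (by linarith)
    have key : (X - W) * (Y^2 - 4 * X * W) ≤
        -(ε * δ * (1 - r₀) / 32) * (4 * (X + Y + W) * X^2) := by
      have k2 : (X - W) * (Y^2 - 4 * X * W) ≤ -(ε * ((X - W) * (X * W))) := by
        nlinarith [k1]
      have k6 : ε * (((1 - r₀) * X) * (X * (δ * X))) ≤ ε * ((X - W) * (X * W)) :=
        mul_le_mul_of_nonneg_left k5 hε0.le
      have k7 : (ε * δ * (1 - r₀) / 32) * (4 * (X + Y + W) * X^2)
          ≤ (ε * δ * (1 - r₀) / 32) * (4 * (8 * X) * X^2) := by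
        apply mul_le_mul_of_nonneg_left _ (div_nonneg (mul_nonneg (mul_nonneg hε0.le hδ0.le)
          (by linarith : (0:ℝ) ≤ 1 - r₀)) (by norm_num))
        linarith [mul_le_mul_of_nonneg_right hN8 (sq_nonneg X)]
      have k8 : (ε * δ * (1 - r₀) / 32) * (4 * (8 * X) * X^2)
          = ε * (((1 - r₀) * X) * (X * (δ * X))) := by ring
      linarith [k2, k6, k7, k8]
    linarith [mul_le_mul_of_nonneg_left key (by positivity : (0:ℝ) ≤ b * β)]
  -- r stays below r₀
  have hrbar : ∀ t, T₂ ≤ t → w t / x t < r₀ :=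
    barrier_lt (fun t ht => hrd t (hT₂0.trans ht))
      (fun t ht heq => lt_of_le_of_lt
        (hrineq t ht (1/2) one_half_pos (by rw [heq]; exact hr₀half) (le_of_eq heq))
        (by
          have hβ0 : (0:ℝ) < β := by linarith
          have h1r : (0:ℝ) < 1 - r₀ := by linarith
          have := div_pos (mul_pos (mul_pos (mul_pos (mul_pos hb hβ0) hε0) one_half_pos) h1r)
            (by norm_num : (0:ℝ) < 32)
          linarith))
      hrT₂
  -- r → 0
  have hrtend : Tendsto (fun t => w t / x t) atTop (nhds 0) := by
    rw [tendsto_order]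
    constructor
    · intro l hl
      rw [eventually_atTop]
      exact ⟨0, fun t ht => by
        obtain ⟨px, py, pw⟩ := hpos t ht
        exact lt_trans hl (div_pos pw px)⟩
    · intro u hu
      obtain ⟨T₃, hT₃a, hT₃⟩ := eventually_lt_of_deriv (a := T₂) (c := u)
        (κ := b * β * ε * u * (1 - r₀) / 32)
        (by have hβ0 : (0:ℝ) < β := by linarith
            have h1r : (0:ℝ) < 1 - r₀ := by linarith
            exact div_pos (mul_pos (mul_pos (mul_pos (mul_pos hb hβ0) hε0) hu) h1r)
              (by norm_num))
        (fun t ht => hrd t (hT₂0.trans ht))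
        (fun t ht hge => hrineq t ht u hu hge (hrbar t ht).le)
      rw [eventually_atTop]
      exact ⟨T₃, hT₃⟩
  -- ρ → 0
  have hρtend : Tendsto (fun t => y t / x t) atTop (nhds 0) := by
    rw [tendsto_order]
    constructor
    · intro l hl
      rw [eventually_atTop]
      exact ⟨0, fun t ht => by
        obtain ⟨px, py, pw⟩ := hpos t ht
        exact lt_trans hl (div_pos py px)⟩
    · intro u hu
      have hev := ((tendsto_order.1 hrtend).2 (u^2/5) (by positivity)).and
        (eventually_ge_atTop (max T₂ 0))
      rw [eventually_atTop] at hev ⊢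
      obtain ⟨T₄, hT₄⟩ := hev
      refine ⟨T₄, fun t ht => ?_⟩
      obtain ⟨hru, htm⟩ := hT₄ t ht
      have ht0 : (0:ℝ) ≤ t := le_trans (le_max_right _ _) htm
      have htT₂ : T₂ ≤ t := le_trans (le_max_left _ _) htm
      obtain ⟨px, py, pw⟩ := hpos t ht0
      have hσt : (y t)^2 / (x t * w t) < 4 - ε := hT₂ t htT₂
      have hxwpos : 0 < x t * w t := mul_pos px pw
      have hσ' : (y t)^2 < (4 - ε) * (x t * w t) := (div_lt_iff₀ hxwpos).mp hσt
      have hr' : w t < (u^2/5) * x t := (div_lt_iff₀ px).mp hru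
      have hsq : (y t / x t)^2 < u^2 := by
        have e1 : (y t / x t)^2 = (y t)^2 / (x t)^2 := by ring
        rw [e1, div_lt_iff₀ (by positivity)]
        nlinarith [mul_pos px pw, mul_pos px px, hε0, mul_le_mul_of_nonneg_left hr'.le
          (by positivity : (0:ℝ) ≤ 4 * x t)]
      nlinarith [div_pos py px, hu, hsq]
  -- the floor for N
  have hth : 0 < b*(β+1)/2 - d := by linarith [mul_pos hb hD]
  set μ := min (x 0 + y 0 + w 0) ((b*(β+1)/2 - d)/c) / 2 with hμdef
  have hμpos : 0 < μ := by
    have h1 : 0 < min (x 0 + y 0 + w 0) ((b*(β+1)/2 - d)/c) :=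
      lt_min (hN 0 le_rfl) (div_pos hth hc)
    rw [hμdef]; linarith
  have hμN0 : μ < x 0 + y 0 + w 0 := by
    have h1 := min_le_left (x 0 + y 0 + w 0) ((b*(β+1)/2 - d)/c)
    have h2 := hN 0 le_rfl
    rw [hμdef]; linarith
  have hμc : c * μ ≤ (b*(β+1)/2 - d)/2 := by
    have h1 := min_le_right (x 0 + y 0 + w 0) ((b*(β+1)/2 - d)/c)
    have h2 : c * ((b*(β+1)/2 - d)/c) = b*(β+1)/2 - d := by field_simp
    rw [hμdef]
    nlinarith [hc, mul_le_mul_of_nonneg_left h1 hc.le, h2]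
  clear_value μ
  have hNfloor : ∀ t, 0 ≤ t → μ < x t + y t + w t := by
    apply barrier_gt hNd _ hμN0
    intro t ht heq
    obtain ⟨px, py, pw⟩ := hpos t ht
    have hNt := hN t ht
    set X := x t with hX; set Y := y t with hY; set W := w t with hW
    have hid : b / (X + Y + W) * (β * X ^ 2 + ((β + 1) / 2) * X * Y + (β / 4) * Y ^ 2)
          - (d + c * (X + Y + W)) * X
        + (b / (X + Y + W) * ((β / 2) * Y ^ 2 + ((β + 1) / 2) * Y * (X + W) + 2 * X * W)
          - (d + c * (X + Y + W)) * Y)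
        + (b / (X + Y + W) * (β * W ^ 2 + ((β + 1) / 2) * W * Y + (β / 4) * Y ^ 2)
          - (d + c * (X + Y + W)) * W)
        = (X + Y + W) * (b*β - d - c*(X + Y + W))
          - (b*(β-1)/(X + Y + W)) * (Y*(X + W) + 2*(X*W)) := by
      field_simp
      ring
    rw [hid, heq]
    have hQhalf : Y*(X + W) + 2*(X*W) ≤ μ^2/2 := by
      nlinarith [sq_nonneg (X - W), sq_nonneg Y, heq]
    have h3 : (b*(β-1)/μ) * (Y*(X + W) + 2*(X*W)) ≤ (b*(β-1)/μ) * (μ^2/2) :=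
      mul_le_mul_of_nonneg_left hQhalf (by positivity)
    have h4 : (b*(β-1)/μ) * (μ^2/2) = b*(β-1)*μ/2 := by field_simp
    have m1 : (c*μ)*μ ≤ ((b*(β+1)/2 - d)/2)*μ := mul_le_mul_of_nonneg_right hμc hμpos.le
    have m2 : 0 < μ*(b*(β+1)/2 - d) := mul_pos hμpos hth
    linarith [h3, h4, m1, m2]
  -- N → ζ
  have hζ : 0 < (b*β - d)/c := div_pos (by linarith [mul_pos hb hD]) hc
  have hNtend : Tendsto (fun t => x t + y t + w t) atTop (nhds ((b*β - d)/c)) := by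
    rw [tendsto_order]
    constructor
    · -- lower bounds
      intro l hl
      set θ := min 1 (c*((b*β - d)/c - l)/(6*b*(β-1))) with hθdef
      have hδ0 : 0 < (b*β - d)/c - l := by linarith
      have hθ0 : 0 < θ := lt_min one_pos (by positivity)
      have hθr : θ ≤ c*((b*β - d)/c - l)/(6*b*(β-1)) := min_le_right _ _
      clear_value θ
      have hev := (((tendsto_order.1 hρtend).2 θ hθ0).and
        ((tendsto_order.1 hrtend).2 θ hθ0)).and (eventually_ge_atTop (0:ℝ))
      rw [eventually_atTop] at hev
      obtain ⟨T₅, hT₅⟩ := hev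
      obtain ⟨T₆, hT₆a, hT₆⟩ := eventually_gt_of_deriv (a := T₅) (c := l)
        (κ := μ*(c*((b*β - d)/c - l))/2)
        (by have := mul_pos hμpos (mul_pos hc hδ0); linarith)
        (fun t ht => hNd t (hT₅ t ht).2)
        (by
          intro t ht hle
          obtain ⟨⟨hyθ, hwθ⟩, ht0⟩ := hT₅ t ht
          obtain ⟨px, py, pw⟩ := hpos t ht0
          have hNt := hN t ht0
          have hμN := hNfloor t ht0
          set X := x t with hX; set Y := y t with hY; set W := w t with hW
          have hid : b / (X + Y + W) * (β * X ^ 2 + ((β + 1) / 2) * X * Y + (β / 4) * Y ^ 2)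
                - (d + c * (X + Y + W)) * X
              + (b / (X + Y + W) * ((β / 2) * Y ^ 2 + ((β + 1) / 2) * Y * (X + W) + 2 * X * W)
                - (d + c * (X + Y + W)) * Y)
              + (b / (X + Y + W) * (β * W ^ 2 + ((β + 1) / 2) * W * Y + (β / 4) * Y ^ 2)
                - (d + c * (X + Y + W)) * W)
              = (X + Y + W) * (b*β - d - c*(X + Y + W))
                - (b*(β-1)/(X + Y + W)) * (Y*(X + W) + 2*(X*W)) := by
            field_simp
            ring
          rw [hid]
          have hy' : Y < θ * X := (div_lt_iff₀ px).mp hyθ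
          have hw' : W < θ * X := (div_lt_iff₀ px).mp hwθ
          have hQle : Y*(X + W) + 2*(X*W) ≤ (Y + 2*W) * (X + Y + W) := by
            nlinarith [sq_nonneg Y, mul_nonneg py.le pw.le, mul_nonneg pw.le pw.le]
          have h3 : (b*(β-1)/(X + Y + W)) * (Y*(X + W) + 2*(X*W))
              ≤ (b*(β-1)/(X + Y + W)) * ((Y + 2*W) * (X + Y + W)) :=
            mul_le_mul_of_nonneg_left hQle (by positivity)
          have h4 : (b*(β-1)/(X + Y + W)) * ((Y + 2*W) * (X + Y + W))
              = b*(β-1)*(Y + 2*W) := by field_simp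
          have hbD : (0:ℝ) ≤ b*(β-1) := by positivity
          have h5 : b*(β-1)*(Y + 2*W) ≤ b*(β-1)*(3*(θ*X)) :=
            mul_le_mul_of_nonneg_left (by linarith) hbD
          have h6' : θ*X ≤ θ*(X + Y + W) := mul_le_mul_of_nonneg_left (by linarith) hθ0.le
          have h6 : b*(β-1)*(3*(θ*X)) ≤ b*(β-1)*(3*(θ*(X + Y + W))) :=
            mul_le_mul_of_nonneg_left (by linarith) hbD
          have hθc : 6*(b*(β-1))*θ ≤ c*((b*β - d)/c - l) := by
            have h8 : (0:ℝ) < 6*b*(β-1) := by positivity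
            have h10 := mul_le_mul_of_nonneg_left hθr h8.le
            have h9 : 6*b*(β-1) * (c*((b*β - d)/c - l)/(6*b*(β-1)))
                = c*((b*β - d)/c - l) := by field_simp
            linarith [h10, h9]
          have hcζ : c * ((b*β - d)/c) = b*β - d := by field_simp
          have m5 : (6*(b*(β-1))*θ)*((X + Y + W)/2)
              ≤ (c*((b*β - d)/c - l))*((X + Y + W)/2) :=
            mul_le_mul_of_nonneg_right hθc (by linarith)
          have m7 : (c*(X + Y + W))*((b*β - d)/c - l) ≤ (c*(X + Y + W))*((b*β - d)/c - (X + Y + W)) :=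
            mul_le_mul_of_nonneg_left (by linarith) (mul_nonneg hc.le hNt.le)
          have m8 : (c*((b*β - d)/c - l)/2)*μ ≤ (c*((b*β - d)/c - l)/2)*(X + Y + W) :=
            mul_le_mul_of_nonneg_left hμN.le (by positivity)
          have m3 : (c*(X + Y + W))*((b*β - d)/c) = (X + Y + W)*(b*β - d) := by
            field_simp
          linarith [h3, h4, h5, h6, m5, m7, m8, m3]
        )
      rw [eventually_atTop]
      exact ⟨T₆, hT₆⟩
    · -- upper bounds
      intro u hu
      obtain ⟨T₇, hT₇a, hT₇⟩ := eventually_lt_of_deriv (a := (0:ℝ)) (c := u)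
        (κ := c*(u - (b*β - d)/c)*u)
        (by have h1 : 0 < u - (b*β - d)/c := by linarith
            have h2 : 0 < u := lt_trans hζ hu
            exact mul_pos (mul_pos hc h1) h2)
        hNd
        (by
          intro t ht hle
          obtain ⟨px, py, pw⟩ := hpos t ht
          have hNt := hN t ht
          set X := x t with hX; set Y := y t with hY; set W := w t with hW
          have hid : b / (X + Y + W) * (β * X ^ 2 + ((β + 1) / 2) * X * Y + (β / 4) * Y ^ 2)
                - (d + c * (X + Y + W)) * X
              + (b / (X + Y + W) * ((β / 2) * Y ^ 2 + ((β + 1) / 2) * Y * (X + W) + 2 * X * W)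
                - (d + c * (X + Y + W)) * Y)
              + (b / (X + Y + W) * (β * W ^ 2 + ((β + 1) / 2) * W * Y + (β / 4) * Y ^ 2)
                - (d + c * (X + Y + W)) * W)
              = (X + Y + W) * (b*β - d - c*(X + Y + W))
                - (b*(β-1)/(X + Y + W)) * (Y*(X + W) + 2*(X*W)) := by
            field_simp
            ring
          rw [hid]
          have hQpos : 0 ≤ (b*(β-1)/(X + Y + W)) * (Y*(X + W) + 2*(X*W)) := by positivity
          have hcζ : c * ((b*β - d)/c) = b*β - d := by field_simp
          have hSu : u ≤ X + Y + W := hle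
          have m1 : 0 ≤ (X + Y + W - u) * ((X + Y + W) + u - (b*β - d)/c) :=
            mul_nonneg (by linarith) (by linarith)
          have m2 : 0 ≤ c * ((X + Y + W - u) * ((X + Y + W) + u - (b*β - d)/c)) :=
            mul_nonneg hc.le m1
          have m3 : (c*(X + Y + W))*((b*β - d)/c) = (X + Y + W)*(b*β - d) := by
            field_simp
          have m4 : (c*u)*((b*β - d)/c) = u*(b*β - d) := by field_simp
          linarith [hQpos, m2, m3, m4]
        )
      rw [eventually_atTop]
      exact ⟨T₇, hT₇⟩
  -- final assembly
  have hone : Tendsto (fun t => 1 + y t / x t + w t / x t) atTop (nhds 1) := by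
    have := (tendsto_const_nhds (α := ℝ) (x := (1:ℝ)) (f := atTop)).add hρtend |>.add hrtend
    simpa using this
  have hxlim : Tendsto x atTop (nhds ((b*β - d)/c)) := by
    have hdiv := hNtend.div hone one_ne_zero
    rw [div_one] at hdiv
    apply hdiv.congr'
    rw [Filter.eventuallyEq_iff_exists_mem]
    refine ⟨Set.Ici 0, Ici_mem_atTop 0, fun t ht => ?_⟩
    obtain ⟨px, py, pw⟩ := hpos t ht
    simp only [Pi.div_apply]
    field_simp
  have hylim : Tendsto y atTop (nhds 0) := by
    have hmul := hρtend.mul hxlim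
    rw [zero_mul] at hmul
    apply hmul.congr'
    rw [Filter.eventuallyEq_iff_exists_mem]
    refine ⟨Set.Ici 0, Ici_mem_atTop 0, fun t ht => ?_⟩
    obtain ⟨px, py, pw⟩ := hpos t ht
    field_simp
  have hwlim : Tendsto w atTop (nhds 0) := by
    have hmul := hrtend.mul hxlim
    rw [zero_mul] at hmul
    apply hmul.congr'
    rw [Filter.eventuallyEq_iff_exists_mem]
    refine ⟨Set.Ici 0, Ici_mem_atTop 0, fun t ht => ?_⟩
    obtain ⟨px, py, pw⟩ := hpos t ht
    field_simp
  have hgoal : (((b * β - d) / c, 0, 0) : ℝ × ℝ × ℝ) = ((b*β - d)/c, (0:ℝ), (0:ℝ)) := rfl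
  rw [hgoal]
  exact hxlim.prodMk_nhds (hylim.prodMk_nhds hwlim)
end

section
/- Let z = (x, y, w) : [0, ∞) → (0, ∞)³ be a global solution of the one-patch COD1 system. If x(0) = w(0), then z(t) converges to (δξ, ξ, δξ) as t → ∞, where δ is the unique positive root of P(X) = X³ + (1/2)X² − (1/4)X − β/8 and ξ = (b(δ + β/2) − d)/((2δ + 1)c). -/
open Filter Set

open Filter Set

/-- Barrier lemma: if derivative is negative whenever `g ≥ M`, then `g` stays `≤ M`. -/
lemma cod1_barrier_le {g G : ℝ → ℝ} {T M : ℝ}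
    (hdg : ∀ t, T ≤ t → HasDerivAt g (G t) t)
    (hB : ∀ t, T ≤ t → M ≤ g t → G t < 0)
    (h0 : g T ≤ M) : ∀ t, T ≤ t → g t ≤ M := by
  intro t₁ ht₁
  by_contra hgt
  push_neg at hgt
  have hT1 : T < t₁ := by
    rcases eq_or_lt_of_le ht₁ with h | h
    · exact absurd (h ▸ h0) (not_le.2 hgt)
    · exact h
  have hcont : ContinuousOn g (Icc T t₁) := fun s hs =>
    ((hdg s hs.1).continuousAt).continuousWithinAt
  set S : Set ℝ := {s ∈ Icc T t₁ | g s ≤ M} with hS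
  have hTS : T ∈ S := ⟨⟨le_refl T, le_of_lt hT1⟩, h0⟩
  have hSeq : S = Icc T t₁ ∩ g ⁻¹' Iic M := by
    ext s; simp only [hS, Set.mem_setOf_eq, Set.mem_inter_iff, Set.mem_preimage, Set.mem_Iic]
  have hScomp : IsCompact S := by
    rw [hSeq]
    exact isCompact_Icc.of_isClosed_subset
      (hcont.preimage_isClosed_of_isClosed isClosed_Icc isClosed_Iic) inter_subset_left
  have hSne : S.Nonempty := ⟨T, hTS⟩
  obtain ⟨s, hsS, hs_max⟩ := hScomp.exists_isGreatest hSne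
  have hsIcc : s ∈ Icc T t₁ := hsS.1
  have hsle : g s ≤ M := hsS.2
  have hst1 : s < t₁ := by
    rcases eq_or_lt_of_le hsIcc.2 with h | h
    · exact absurd (h ▸ hsle) (not_le.2 hgt)
    · exact h
  -- on (s, t₁], g > M
  have hgtM : ∀ u ∈ Ioc s t₁, M < g u := by
    intro u hu
    by_contra hle
    push_neg at hle
    exact absurd (hs_max ⟨⟨le_trans hsIcc.1 hu.1.le, hu.2⟩, hle⟩) (not_le.2 hu.1)
  -- g strictly decreasing on [s, t₁]
  have hanti : StrictAntiOn g (Icc s t₁) := by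
    apply strictAntiOn_of_deriv_neg (convex_Icc s t₁)
    · exact fun u hu => ((hdg u (le_trans hsIcc.1 hu.1)).continuousAt).continuousWithinAt
    · intro u hu
      rw [interior_Icc] at hu
      have hu' : T ≤ u := le_trans hsIcc.1 hu.1.le
      rw [(hdg u hu').deriv]
      exact hB u hu' (le_of_lt (hgtM u ⟨hu.1, hu.2.le⟩))
  have := hanti (left_mem_Icc.2 hst1.le) (right_mem_Icc.2 hst1.le) hst1
  -- g t₁ < g s ≤ M but g t₁ > M
  linarith [hgt]

lemma cod1_barrier_ge {g G : ℝ → ℝ} {T M : ℝ}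
    (hdg : ∀ t, T ≤ t → HasDerivAt g (G t) t)
    (hB : ∀ t, T ≤ t → g t ≤ M → 0 < G t)
    (h0 : M ≤ g T) : ∀ t, T ≤ t → M ≤ g t := by
  have := cod1_barrier_le (g := fun t => -g t) (G := fun t => -G t) (T := T) (M := -M)
    (fun t ht => (hdg t ht).neg)
    (fun t ht hM => by
      have := hB t ht (by linarith)
      linarith)
    (by linarith)
  intro t ht
  have h2 := this t ht
  linarith

/-- If the derivative is uniformly negative whenever `g ≥ M` (for `t ≥ T`), then
eventually `g ≤ M`. -/
lemma cod1_eventually_le {g G : ℝ → ℝ} {T M η : ℝ} (hη : 0 < η)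
    (hdg : ∀ t, T ≤ t → HasDerivAt g (G t) t)
    (hG : ∀ t, T ≤ t → M ≤ g t → G t ≤ -η) :
    ∃ T', T ≤ T' ∧ ∀ t, T' ≤ t → g t ≤ M := by
  have ht₀ : ∃ t₀, T ≤ t₀ ∧ g t₀ ≤ M := by
    by_contra hcon
    push_neg at hcon
    have hGneg : ∀ t, T ≤ t → G t ≤ -η := fun t ht => hG t ht (le_of_lt (hcon t ht))
    set h : ℝ → ℝ := fun t => g t + η * t with hh
    have hanti : AntitoneOn h (Ici T) := by
      apply antitoneOn_of_deriv_nonpos (convex_Ici T)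
      · exact fun u hu => (((hdg u hu).add ((hasDerivAt_id u).const_mul η)).continuousAt).continuousWithinAt
      · intro u hu
        rw [interior_Ici] at hu
        exact ((hdg u hu.le).add ((hasDerivAt_id u).const_mul η)).differentiableAt.differentiableWithinAt
      · intro u hu
        rw [interior_Ici] at hu
        have hD : HasDerivAt h (G u + η * 1) u :=
          (hdg u hu.le).add ((hasDerivAt_id u).const_mul η)
        rw [hD.deriv]
        have := hGneg u hu.le
        linarith
    set t₁ : ℝ := T + (g T - M) / η + 1 with ht₁def
    have hgTM : M < g T := hcon T le_rfl
    have ht₁T : T ≤ t₁ := by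
      have : 0 < (g T - M) / η := div_pos (by linarith) hη
      rw [ht₁def]; linarith
    have := hanti Set.self_mem_Ici (mem_Ici.2 ht₁T) ht₁T
    simp only [hh] at this
    have hgt₁ : g t₁ ≤ g T - η * (t₁ - T) := by nlinarith
    have : η * (t₁ - T) = (g T - M) + η := by
      rw [ht₁def]; field_simp; ring
    nlinarith [hcon t₁ ht₁T]
  obtain ⟨t₀, ht₀T, hgt₀⟩ := ht₀
  exact ⟨t₀, ht₀T, cod1_barrier_le (fun t ht => hdg t (le_trans ht₀T ht))
    (fun t ht hM => lt_of_le_of_lt (hG t (le_trans ht₀T ht) hM) (by linarith)) hgt₀⟩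

lemma cod1_eventually_ge {g G : ℝ → ℝ} {T M η : ℝ} (hη : 0 < η)
    (hdg : ∀ t, T ≤ t → HasDerivAt g (G t) t)
    (hG : ∀ t, T ≤ t → g t ≤ M → η ≤ G t) :
    ∃ T', T ≤ T' ∧ ∀ t, T' ≤ t → M ≤ g t := by
  obtain ⟨T', hT', h⟩ := cod1_eventually_le (g := fun t => -g t) (G := fun t => -G t)
    (T := T) (M := -M) hη (fun t ht => (hdg t ht).neg)
    (fun t ht hM => by
      have := hG t ht (by linarith)
      linarith)
  exact ⟨T', hT', fun t ht => by have := h t ht; linarith⟩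

noncomputable def cod1F (b β s : ℝ) : ℝ :=
  -2*b*(s^3 + (1/2)*s^2 - (1/4)*s - β/8)/(2*s+1)

noncomputable def cod1B (b d c β s v : ℝ) : ℝ :=
  b*(β/2 + (β+1)*s + 2*s^2)/(2*s+1) - (d + c*(2*s+1)*v)

lemma cod1_delta_half {β δ : ℝ} (hβ : 1 < β) (hδ : 0 ≤ δ)
    (hP : δ^3 + (1/2)*δ^2 - (1/4)*δ - β/8 = 0) : 1/2 < δ := by
  by_contra h
  push_neg at h
  nlinarith [sq_nonneg δ, sq_nonneg (δ - 1/2)]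

lemma cod1_delta_exists {β : ℝ} (hβ : 1 < β) :
    ∃ δ : ℝ, 0 < δ ∧ δ^3 + (1/2)*δ^2 - (1/4)*δ - β/8 = 0 := by
  have hcont : ContinuousOn (fun s : ℝ => s^3 + (1/2)*s^2 - (1/4)*s - β/8) (Set.Icc 0 β) := by
    fun_prop
  have h0β : (0:ℝ) ≤ β := by linarith
  have hmem : (0:ℝ) ∈ Set.Icc ((fun s : ℝ => s^3 + (1/2)*s^2 - (1/4)*s - β/8) 0)
      ((fun s : ℝ => s^3 + (1/2)*s^2 - (1/4)*s - β/8) β) := by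
    constructor
    · simp only
      nlinarith
    · simp only
      nlinarith [sq_nonneg β]
  obtain ⟨δ, hδmem, hδeq⟩ := intermediate_value_Icc h0β hcont hmem
  refine ⟨δ, ?_, hδeq⟩
  rcases eq_or_lt_of_le hδmem.1 with h | h
  · exfalso
    rw [← h] at hδeq
    simp only at hδeq
    nlinarith
  · exact h

lemma cod1_F_upper {b β δ e s : ℝ} (hb : 0 < b) (hδ : 1/2 < δ)
    (hP : δ^3 + (1/2)*δ^2 - (1/4)*δ - β/8 = 0) (he : 0 < e) (hs : δ + e ≤ s) :
    cod1F b β s ≤ -(2*b*e/(2*δ+2*e+1)) := by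
  have key : s^3 + (1/2)*s^2 - (1/4)*s - β/8
      = (s - δ)*(s^2 + s*δ + δ^2 + (s+δ)/2 - 1/4) := by linear_combination hP
  have hs1 : 0 < 2*s+1 := by linarith
  have hden : 0 < 2*δ+2*e+1 := by linarith
  have h1 : e ≤ s - δ := by linarith
  set Q : ℝ := s^2 + s*δ + δ^2 + (s+δ)/2 - 1/4 with hQdef
  have hQ : 1 ≤ Q := by rw [hQdef]; nlinarith
  have h2 : e*(2*s+1) ≤ (s-δ)*(2*δ+2*e+1) := by nlinarith
  have h3 : (s-δ)*(2*δ+2*e+1) ≤ (s-δ)*Q*(2*δ+2*e+1) := by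
    nlinarith [mul_nonneg (mul_nonneg (by linarith : (0:ℝ) ≤ s - δ)
      (by linarith : (0:ℝ) ≤ 2*δ+2*e+1)) (by linarith : (0:ℝ) ≤ Q - 1)]
  have goal' : 2*b*e/(2*δ+2*e+1) ≤ 2*b*((s-δ)*Q)/(2*s+1) := by
    rw [div_le_div_iff₀ hden hs1]
    nlinarith [mul_le_mul_of_nonneg_left (le_trans h2 h3) (by positivity : (0:ℝ) ≤ 2*b)]
  calc cod1F b β s = -(2*b*((s-δ)*Q)/(2*s+1)) := by rw [cod1F, key, hQdef]; ring
    _ ≤ -(2*b*e/(2*δ+2*e+1)) := neg_le_neg goal'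

lemma cod1_F_lower {b β δ e s : ℝ} (hb : 0 < b) (hδ : 1/2 < δ)
    (hP : δ^3 + (1/2)*δ^2 - (1/4)*δ - β/8 = 0) (he : 0 < e)
    (hs0 : 0 < s) (hs : s ≤ δ - e) :
    2*b*e*(δ^2+δ/2-1/4)/(2*δ+1) ≤ cod1F b β s := by
  have key : s^3 + (1/2)*s^2 - (1/4)*s - β/8
      = (s - δ)*(s^2 + s*δ + δ^2 + (s+δ)/2 - 1/4) := by linear_combination hP
  have hs1 : 0 < 2*s+1 := by linarith
  have hden : 0 < 2*δ+1 := by linarith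
  have hq : 0 < δ^2+δ/2-1/4 := by nlinarith
  have h1 : e ≤ δ - s := by linarith
  set Q : ℝ := s^2 + s*δ + δ^2 + (s+δ)/2 - 1/4 with hQdef
  have hQ : δ^2+δ/2-1/4 ≤ Q := by rw [hQdef]; nlinarith
  have h2 : e*(δ^2+δ/2-1/4) ≤ (δ-s)*Q :=
    mul_le_mul h1 hQ hq.le (by linarith)
  have h3 : (2*s+1) ≤ (2*δ+1) := by linarith
  have goal' : 2*b*e*(δ^2+δ/2-1/4)/(2*δ+1) ≤ 2*b*((δ-s)*Q)/(2*s+1) := by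
    rw [div_le_div_iff₀ hden hs1]
    nlinarith [mul_le_mul h2 h3 (by linarith)
      (mul_nonneg (by linarith : (0:ℝ) ≤ δ - s) (le_trans hq.le hQ)),
      mul_pos hb he]
  calc 2*b*e*(δ^2+δ/2-1/4)/(2*δ+1) ≤ 2*b*((δ-s)*Q)/(2*s+1) := goal'
    _ = cod1F b β s := by rw [cod1F, key, hQdef]; ring

open Set in
lemma cod1_linear_ode_zero {u G : ℝ → ℝ}
    (hGc : ∀ t, 0 ≤ t → ContinuousAt G t)
    (hdu : ∀ t, 0 ≤ t → HasDerivAt u (G t * u t) t)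
    (h0 : u 0 = 0) : ∀ t, 0 ≤ t → u t = 0 := by
  intro T hT
  have hGcon : ContinuousOn G (Icc 0 T) := fun s hs => (hGc s hs.1).continuousWithinAt
  obtain ⟨C, hC⟩ := (isCompact_Icc (a := (0:ℝ)) (b := T)).exists_bound_of_continuousOn hGcon
  have hcont : ContinuousOn u (Icc 0 T) := fun s hs =>
    ((hdu s hs.1).continuousAt).continuousWithinAt
  have hderiv : ∀ s ∈ Ico 0 T, HasDerivWithinAt u (G s * u s) (Ici s) s := fun s hs =>
    ((hdu s hs.1).hasDerivWithinAt)
  have hbound : ∀ s ∈ Ico 0 T, ‖G s * u s‖ ≤ C * ‖u s‖ + 0 := by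
    intro s hs
    rw [norm_mul, add_zero]
    exact mul_le_mul_of_nonneg_right (hC s ⟨hs.1, hs.2.le⟩) (norm_nonneg _)
  have := norm_le_gronwallBound_of_norm_deriv_right_le (δ := 0) (K := C) (ε := 0)
    hcont hderiv (by simp [h0]) hbound T (right_mem_Icc.2 hT)
  rw [gronwallBound_ε0] at this
  simp at this
  exact this

lemma cod1B_sub (b d c β s v₁ v₂ : ℝ) :
    cod1B b d c β s v₂ = cod1B b d c β s v₁ - c*(2*s+1)*(v₂-v₁) := by
  simp only [cod1B]; ring

lemma cod1B_value {b d c β δ : ℝ} (hc : c ≠ 0) (hδ : (0:ℝ) < 2*δ+1) :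
    cod1B b d c β δ ((b*(δ+β/2)-d)/((2*δ+1)*c)) = 0 := by
  have h1 : (2*δ+1) ≠ 0 := ne_of_gt hδ
  rw [cod1B]
  field_simp
  ring

lemma cod1B_contAt {b d c β v δ : ℝ} (hδ : (0:ℝ) < 2*δ+1) :
    ContinuousAt (fun s => cod1B b d c β s v) δ := by
  apply ContinuousAt.sub
  · exact ContinuousAt.div (by fun_prop) (by fun_prop) (ne_of_gt hδ)
  · fun_prop


open Filter

set_option maxHeartbeats 2000000 in
/-- Let z = (x, y, w) : [0, ∞) → (0, ∞)³ be a global solution of the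
one-patch COD1 system. If x(0) = w(0), then z(t) converges to (δξ, ξ, δξ) as t → ∞,
where δ is the unique positive root of P(X) = X³ + (1/2)X² − (1/4)X − β/8 and
ξ = (b(δ + β/2) − d)/((2δ + 1)c). -/
theorem cod1_one_patch_convergence_sym (b d c β : ℝ) (hdb : d < b) (hd : 0 < d) (hc : 0 < c)
    (hβ : 1 < β) (x y w : ℝ → ℝ)
    (hpos : ∀ t : ℝ, 0 ≤ t → 0 < x t ∧ 0 < y t ∧ 0 < w t)
    (hx : ∀ t : ℝ, 0 ≤ t → HasDerivAt x
      (b / (x t + y t + w t) * (β * (x t) ^ 2 + ((β + 1) / 2) * x t * y t + (β / 4) * (y t) ^ 2)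
        - (d + c * (x t + y t + w t)) * x t) t)
    (hy : ∀ t : ℝ, 0 ≤ t → HasDerivAt y
      (b / (x t + y t + w t) * ((β / 2) * (y t) ^ 2 + ((β + 1) / 2) * y t * (x t + w t)
          + 2 * x t * w t)
        - (d + c * (x t + y t + w t)) * y t) t)
    (hw : ∀ t : ℝ, 0 ≤ t → HasDerivAt w
      (b / (x t + y t + w t) * (β * (w t) ^ 2 + ((β + 1) / 2) * w t * y t + (β / 4) * (y t) ^ 2)
        - (d + c * (x t + y t + w t)) * w t) t)
    (h0 : x 0 = w 0) :
    ∃ δ : ℝ, 0 < δ ∧ δ ^ 3 + (1 / 2) * δ ^ 2 - (1 / 4) * δ - β / 8 = 0 ∧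
      Tendsto (fun t => (x t, y t, w t)) atTop
        (nhds ((δ * ((b * (δ + β / 2) - d) / ((2 * δ + 1) * c)),
                (b * (δ + β / 2) - d) / ((2 * δ + 1) * c),
                δ * ((b * (δ + β / 2) - d) / ((2 * δ + 1) * c))) : ℝ × ℝ × ℝ)) := by
  obtain ⟨δ, hδpos, hPδ⟩ := cod1_delta_exists hβ
  have hδh : (1:ℝ)/2 < δ := cod1_delta_half hβ hδpos.le hPδ
  have hb : 0 < b := lt_trans hd hdb
  have h2δ : (0:ℝ) < 2*δ+1 := by linarith
  set ξ : ℝ := (b * (δ + β / 2) - d) / ((2 * δ + 1) * c) with hξdef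
  have hξpos : 0 < ξ := by
    rw [hξdef]
    apply div_pos
    · nlinarith
    · positivity
  refine ⟨δ, hδpos, by linarith [hPδ], ?_⟩
  have hN : ∀ t, 0 ≤ t → 0 < x t + y t + w t := fun t ht => by
    obtain ⟨h1,h2,h3⟩ := hpos t ht; linarith
  -- Step 1 : x = w on [0, ∞)
  have hxw : ∀ t, 0 ≤ t → x t = w t := by
    set G : ℝ → ℝ := fun t => b/(x t + y t + w t) * (β*(x t + w t) + ((β+1)/2)* y t)
      - (d + c*(x t + y t + w t)) with hGdef
    have hGc : ∀ t, 0 ≤ t → ContinuousAt G t := by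
      intro t ht
      have h1 : ContinuousAt x t := (hx t ht).continuousAt
      have h2 : ContinuousAt y t := (hy t ht).continuousAt
      have h3 : ContinuousAt w t := (hw t ht).continuousAt
      have hN' : x t + y t + w t ≠ 0 := (hN t ht).ne'
      exact (((continuousAt_const.div ((h1.add h2).add h3) hN').mul
        ((continuousAt_const.mul (h1.add h3)).add (continuousAt_const.mul h2))).sub
        (continuousAt_const.add (continuousAt_const.mul ((h1.add h2).add h3))))
    have hdu : ∀ t, 0 ≤ t → HasDerivAt (fun t => x t - w t) (G t * (x t - w t)) t := by
      intro t ht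
      have h := (hx t ht).sub (hw t ht)
      refine h.congr_deriv ?_
      have hN' : x t + y t + w t ≠ 0 := (hN t ht).ne'
      rw [hGdef]
      field_simp
      ring
    have key := cod1_linear_ode_zero hGc hdu (by simp [h0])
    intro t ht
    have := key t ht
    linarith
  -- the ratio r = x / y and its autonomous ODE
  set r : ℝ → ℝ := fun t => x t / y t with hrdef
  have hrpos : ∀ t, 0 ≤ t → 0 < r t := fun t ht =>
    div_pos (hpos t ht).1 (hpos t ht).2.1
  have hdr : ∀ t, 0 ≤ t → HasDerivAt r (cod1F b β (r t)) t := by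
    intro t ht
    obtain ⟨hx0, hy0, hw0⟩ := hpos t ht
    have h := ((hx t ht).div (hy t ht) hy0.ne')
    refine h.congr_deriv ?_
    rw [cod1F, hrdef]
    simp only
    have hww : w t = x t := (hxw t ht).symm
    rw [hww]
    have h2r : (0:ℝ) < 2*(x t / y t)+1 := by positivity
    have hN2 : x t + y t + x t ≠ 0 := by positivity
    field_simp
    ring
  -- convergence of r to δ
  have htr : Tendsto r atTop (nhds δ) := by
    rw [Metric.tendsto_atTop]
    intro ε hε
    have he : 0 < ε/2 := by linarith
    obtain ⟨T₁, hT₁0, hup⟩ := cod1_eventually_le (T := (0:ℝ)) (M := δ + ε/2)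
      (η := 2*b*(ε/2)/(2*δ+2*(ε/2)+1)) (by positivity) hdr
      (fun t ht hM => cod1_F_upper hb hδh hPδ he hM)
    have hq : (0:ℝ) < δ^2+δ/2-1/4 := by nlinarith
    obtain ⟨T₂, hT₂0, hlo⟩ := cod1_eventually_ge (T := (0:ℝ)) (M := δ - ε/2)
      (η := 2*b*(ε/2)*(δ^2+δ/2-1/4)/(2*δ+1)) (by positivity) hdr
      (fun t ht hM => cod1_F_lower hb hδh hPδ he (hrpos t ht) hM)
    refine ⟨max T₁ T₂, fun t ht => ?_⟩
    have h1 := hup t (le_trans (le_max_left _ _) ht)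
    have h2 := hlo t (le_trans (le_max_right _ _) ht)
    rw [Real.dist_eq, abs_lt]
    constructor <;> linarith
  -- derivative of y in terms of r
  have hdy2 : ∀ t, 0 ≤ t → HasDerivAt y (y t * cod1B b d c β (r t) (y t)) t := by
    intro t ht
    obtain ⟨hx0, hy0, hw0⟩ := hpos t ht
    convert hy t ht using 1
    rw [cod1B, hrdef]
    simp only
    have hww : w t = x t := (hxw t ht).symm
    rw [hww]
    have h2r : (0:ℝ) < 2*(x t / y t)+1 := by positivity
    have hN2 : x t + y t + x t ≠ 0 := by positivity
    field_simp
    ring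
  -- convergence of y to ξ
  have hty : Tendsto y atTop (nhds ξ) := by
    rw [Metric.tendsto_atTop]
    intro ε hε
    set e' : ℝ := min (ε/2) (ξ/2) with he'def
    have he' : 0 < e' := lt_min (by linarith) (by linarith)
    have he'ξ : e' ≤ ξ/2 := min_le_right _ _
    have he'ε : e' ≤ ε/2 := min_le_left _ _
    set a : ℝ := c*(2*δ+1)*e'/2 with hadef
    have ha : 0 < a := by rw [hadef]; positivity
    have hBval : cod1B b d c β δ ξ = 0 := by
      rw [hξdef]; exact cod1B_value hc.ne' h2δ
    -- upper continuity bound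
    have hφδ : cod1B b d c β δ (ξ+e') = -(c*(2*δ+1)*e') := by
      rw [cod1B_sub b d c β δ ξ (ξ+e'), hBval]; ring
    obtain ⟨ρ₁, hρ₁, hball₁⟩ := Metric.continuousAt_iff.1
      (cod1B_contAt (b := b) (d := d) (c := c) (β := β) (v := ξ + e') h2δ) a ha
    -- lower continuity bound
    have hψδ : cod1B b d c β δ (ξ-e') = c*(2*δ+1)*e' := by
      rw [cod1B_sub b d c β δ ξ (ξ-e'), hBval]; ring
    obtain ⟨ρ₂, hρ₂, hball₂⟩ := Metric.continuousAt_iff.1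
      (cod1B_contAt (b := b) (d := d) (c := c) (β := β) (v := ξ - e') h2δ) a ha
    -- time after which r is close to δ
    obtain ⟨T₀, hT₀⟩ := (Metric.tendsto_atTop.1 htr) (min ρ₁ ρ₂) (lt_min hρ₁ hρ₂)
    set T : ℝ := max T₀ 0 with hTdef
    have hT0 : (0:ℝ) ≤ T := le_max_right _ _
    have hrT : ∀ t, T ≤ t → dist (r t) δ < min ρ₁ ρ₂ := fun t ht =>
      hT₀ t (le_trans (le_max_left _ _) ht)
    -- upper bound for B when y is large
    have hφbound : ∀ t, T ≤ t → cod1B b d c β (r t) (ξ+e') < -a := by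
      intro t ht
      have := hball₁ (lt_of_lt_of_le (hrT t ht) (min_le_left _ _))
      rw [Real.dist_eq, hφδ, abs_lt] at this
      have haa : a = c*(2*δ+1)*e'/2 := hadef
      linarith [this.2]
    have hψbound : ∀ t, T ≤ t → a < cod1B b d c β (r t) (ξ-e') := by
      intro t ht
      have := hball₂ (lt_of_lt_of_le (hrT t ht) (min_le_right _ _))
      rw [Real.dist_eq, hψδ, abs_lt] at this
      linarith [this.1]
    -- eventual upper bound on y
    have hBup : ∀ t, T ≤ t → ξ+e' ≤ y t →
        y t * cod1B b d c β (r t) (y t) ≤ -((ξ+e')*a) := by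
      intro t ht hyt
      have ht0 : (0:ℝ) ≤ t := le_trans hT0 ht
      have hrp := hrpos t ht0
      have hBy : cod1B b d c β (r t) (y t) ≤ cod1B b d c β (r t) (ξ+e') := by
        rw [cod1B_sub b d c β (r t) (ξ+e') (y t)]
        have : 0 ≤ c*(2*(r t)+1)*(y t - (ξ+e')) := by
          apply mul_nonneg (mul_nonneg hc.le (by linarith)) (by linarith)
        linarith
      have hB : cod1B b d c β (r t) (y t) ≤ -a := le_trans hBy (hφbound t ht).le
      nlinarith [(hpos t ht0).2.1, hξpos, he', ha]
    obtain ⟨T₃, hT₃, hyub⟩ := cod1_eventually_le (T := T) (M := ξ+e') (η := (ξ+e')*a)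
      (by positivity) (fun t ht => hdy2 t (le_trans hT0 ht)) hBup
    -- positive floor for y
    set μ : ℝ := min (y T) (ξ-e') with hμdef
    have hμpos : 0 < μ := lt_min (hpos T hT0).2.1 (by linarith)
    have hfloor : ∀ t, T ≤ t → μ ≤ y t := by
      apply cod1_barrier_ge (G := fun t => y t * cod1B b d c β (r t) (y t))
        (fun t ht => hdy2 t (le_trans hT0 ht))
      · intro t ht hyt
        have ht0 : (0:ℝ) ≤ t := le_trans hT0 ht
        have hBy : cod1B b d c β (r t) (ξ-e') ≤ cod1B b d c β (r t) (y t) := by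
          rw [cod1B_sub b d c β (r t) (ξ-e') (y t)]
          have hμξ : μ ≤ ξ - e' := min_le_right _ _
          have : c*(2*(r t)+1)*(y t - (ξ-e')) ≤ 0 := by
            apply mul_nonpos_of_nonneg_of_nonpos
              (mul_nonneg hc.le (by linarith [hrpos t ht0])) (by linarith)
          linarith
        have hB : a < cod1B b d c β (r t) (y t) := lt_of_lt_of_le (hψbound t ht) hBy
        exact mul_pos (hpos t ht0).2.1 (lt_trans ha hB)
      · exact min_le_left _ _
    -- eventual lower bound on y
    have hBlo : ∀ t, T ≤ t → y t ≤ ξ-e' →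
        μ*a ≤ y t * cod1B b d c β (r t) (y t) := by
      intro t ht hyt
      have ht0 : (0:ℝ) ≤ t := le_trans hT0 ht
      have hBy : cod1B b d c β (r t) (ξ-e') ≤ cod1B b d c β (r t) (y t) := by
        rw [cod1B_sub b d c β (r t) (ξ-e') (y t)]
        have : c*(2*(r t)+1)*(y t - (ξ-e')) ≤ 0 := by
          apply mul_nonpos_of_nonneg_of_nonpos
            (mul_nonneg hc.le (by linarith [hrpos t ht0])) (by linarith)
        linarith
      have hB : a ≤ cod1B b d c β (r t) (y t) := le_trans (hψbound t ht).le hBy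
      exact mul_le_mul (hfloor t ht) hB ha.le (hpos t ht0).2.1.le
    obtain ⟨T₄, hT₄, hylb⟩ := cod1_eventually_ge (T := T) (M := ξ-e') (η := μ*a)
      (by positivity) (fun t ht => hdy2 t (le_trans hT0 ht)) hBlo
    refine ⟨max T₃ T₄, fun t ht => ?_⟩
    have h1 := hyub t (le_trans (le_max_left _ _) ht)
    have h2 := hylb t (le_trans (le_max_right _ _) ht)
    rw [Real.dist_eq, abs_lt]
    constructor <;> linarith
  -- assemble
  have hxy : ∀ᶠ t in atTop, r t * y t = x t := by
    filter_upwards [eventually_ge_atTop (0:ℝ)] with t ht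
    rw [hrdef]
    exact div_mul_cancel₀ (x t) (hpos t ht).2.1.ne'
  have htx : Tendsto x atTop (nhds (δ * ξ)) :=
    (htr.mul hty).congr' hxy
  have htw : Tendsto w atTop (nhds (δ * ξ)) := by
    apply htx.congr'
    filter_upwards [eventually_ge_atTop (0:ℝ)] with t ht
    exact hxw t ht
  exact htx.prodMk_nhds (hty.prodMk_nhds htw)
end

section
/- Along any solution (x, y, w) of the one-patch COD1 system with positive coordinates, the identity x'(t) − w'(t) = (x(t) − w(t))·(bβ − d − cN(t) − b((β − 1)/2)·y(t)/N(t)) holds, where N = x + y + w. Consequently, each of the three sets {x = w}, {x > w} and {x < w} (intersected with the open positive octant) is invariant under the flow of the system. -/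
/-- Along any solution (x, y, w) of the one-patch COD1 system with positive
coordinates, x'(t) − w'(t) = (x(t) − w(t))·(bβ − d − cN(t) − b((β − 1)/2)·y(t)/N(t)),
where N = x + y + w. Consequently each of {x = w}, {x > w}, {x < w} (in the open
positive octant) is invariant under the flow. -/
theorem cod1_one_patch_difference_identity_and_invariance (b d c β : ℝ)
    (hdb : d < b) (hd : 0 < d) (hc : 0 < c) (hβ : 1 < β) (x y w : ℝ → ℝ)
    (hpos : ∀ t : ℝ, 0 ≤ t → 0 < x t ∧ 0 < y t ∧ 0 < w t)
    (hx : ∀ t : ℝ, 0 ≤ t → HasDerivAt x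
      (b / (x t + y t + w t) * (β * (x t) ^ 2 + ((β + 1) / 2) * x t * y t + (β / 4) * (y t) ^ 2)
        - (d + c * (x t + y t + w t)) * x t) t)
    (hy : ∀ t : ℝ, 0 ≤ t → HasDerivAt y
      (b / (x t + y t + w t) * ((β / 2) * (y t) ^ 2 + ((β + 1) / 2) * y t * (x t + w t)
          + 2 * x t * w t)
        - (d + c * (x t + y t + w t)) * y t) t)
    (hw : ∀ t : ℝ, 0 ≤ t → HasDerivAt w
      (b / (x t + y t + w t) * (β * (w t) ^ 2 + ((β + 1) / 2) * w t * y t + (β / 4) * (y t) ^ 2)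
        - (d + c * (x t + y t + w t)) * w t) t) :
    (∀ t : ℝ, 0 ≤ t → HasDerivAt (fun s => x s - w s)
      ((x t - w t) * (b * β - d - c * (x t + y t + w t)
        - b * ((β - 1) / 2) * (y t / (x t + y t + w t)))) t) ∧
    (∀ s : ℝ, 0 ≤ s → x s = w s → ∀ t : ℝ, s ≤ t → x t = w t) ∧
    (∀ s : ℝ, 0 ≤ s → w s < x s → ∀ t : ℝ, s ≤ t → w t < x t) ∧
    (∀ s : ℝ, 0 ≤ s → x s < w s → ∀ t : ℝ, s ≤ t → x t < w t) := by
  have hN : ∀ t : ℝ, 0 ≤ t → 0 < x t + y t + w t := by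
    intro t ht
    obtain ⟨h1, h2, h3⟩ := hpos t ht
    linarith
  -- Part 1: the derivative identity
  have hderiv : ∀ t : ℝ, 0 ≤ t → HasDerivAt (fun s => x s - w s)
      ((x t - w t) * (b * β - d - c * (x t + y t + w t)
        - b * ((β - 1) / 2) * (y t / (x t + y t + w t)))) t := by
    intro t ht
    have h := (hx t ht).sub (hw t ht)
    refine h.congr_deriv ?_
    have hNt : x t + y t + w t ≠ 0 := (hN t ht).ne'
    field_simp
    ring
  refine ⟨hderiv, ?_⟩
  -- Setup for invariance: integrating factor
  set m : ℝ → ℝ := fun t => max t 0 with hm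
  have hm0 : ∀ t : ℝ, 0 ≤ m t := fun t => le_max_right t 0
  have hmcont : Continuous m := continuous_id.max continuous_const
  have hcX : Continuous (fun t => x (m t)) := by
    rw [continuous_iff_continuousAt]
    exact fun t => ((hx (m t) (hm0 t)).continuousAt).comp hmcont.continuousAt
  have hcY : Continuous (fun t => y (m t)) := by
    rw [continuous_iff_continuousAt]
    exact fun t => ((hy (m t) (hm0 t)).continuousAt).comp hmcont.continuousAt
  have hcW : Continuous (fun t => w (m t)) := by
    rw [continuous_iff_continuousAt]
    exact fun t => ((hw (m t) (hm0 t)).continuousAt).comp hmcont.continuousAt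
  set g : ℝ → ℝ := fun t => b * β - d - c * (x (m t) + y (m t) + w (m t))
      - b * ((β - 1) / 2) * (y (m t) / (x (m t) + y (m t) + w (m t))) with hg
  have hNm : ∀ t : ℝ, x (m t) + y (m t) + w (m t) ≠ 0 := fun t => (hN (m t) (hm0 t)).ne'
  have hgc : Continuous g := by
    apply Continuous.sub
    · exact Continuous.sub continuous_const
        (continuous_const.mul ((hcX.add hcY).add hcW))
    · exact continuous_const.mul (hcY.div ((hcX.add hcY).add hcW) hNm)
  set F : ℝ → ℝ := fun t => ∫ s in (0:ℝ)..t, g s with hF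
  have hFd : ∀ t : ℝ, HasDerivAt F (g t) t := fun t =>
    (hgc.integral_hasStrictDerivAt 0 t).hasDerivAt
  set h : ℝ → ℝ := fun t => (x t - w t) * Real.exp (-(F t)) with hh
  have hhd : ∀ t : ℝ, 0 ≤ t → HasDerivAt h 0 t := by
    intro t ht
    have h1 := hderiv t ht
    have h2 : HasDerivAt (fun s => Real.exp (-(F s)))
        (Real.exp (-(F t)) * -(g t)) t := ((hFd t).neg).exp
    have h3 := h1.mul h2
    refine h3.congr_deriv ?_
    have hmt : m t = t := max_eq_left ht
    have hgt : g t = b * β - d - c * (x t + y t + w t)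
        - b * ((β - 1) / 2) * (y t / (x t + y t + w t)) := by
      simp only [hg, hmt]
    rw [hgt]
    ring
  -- Constancy of h on [s, t]
  have hkey : ∀ s : ℝ, 0 ≤ s → ∀ t : ℝ, s ≤ t → h t = h s := by
    intro s hs t hst
    have hcont : ContinuousOn h (Set.Icc s t) := by
      intro τ hτ
      exact ((hhd τ (le_trans hs hτ.1)).continuousAt).continuousWithinAt
    have hder : ∀ τ ∈ Set.Ico s t, HasDerivWithinAt h 0 (Set.Ici τ) τ := by
      intro τ hτ
      exact (hhd τ (le_trans hs hτ.1)).hasDerivWithinAt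
    exact constant_of_has_deriv_right_zero hcont hder t ⟨hst, le_refl t⟩
  have hexp : ∀ t : ℝ, 0 < Real.exp (-(F t)) := fun t => Real.exp_pos _
  refine ⟨?_, ?_, ?_⟩
  · intro s hs hsw t hst
    have hk := hkey s hs t hst
    have hhs : h s = 0 := by simp [hh, hsw]
    rw [hhs] at hk
    have := mul_eq_zero.mp hk
    rcases this with h0 | h0
    · linarith [sub_eq_zero.mp h0]
    · exact absurd h0 (hexp t).ne'
  · intro s hs hsw t hst
    have hk := hkey s hs t hst
    have hhs : 0 < h s := mul_pos (by linarith) (hexp s)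
    rw [← hk] at hhs
    simp only [hh] at hhs
    nlinarith [hexp t]
  · intro s hs hsw t hst
    have hk := hkey s hs t hst
    have hhs : h s < 0 := mul_neg_of_neg_of_pos (by linarith) (hexp s)
    rw [← hk] at hhs
    simp only [hh] at hhs
    nlinarith [hexp t]
end

section
/- Every fixed point (x, y, w) of the one-patch COD1 system with all three coordinates positive satisfies (x − w)·(xw − y²/4) = 0; moreover the case 4xw = y² with x ≠ w is impossible, so every such fixed point satisfies x = w. -/
/-- Every fixed point (x, y, w) of the one-patch COD1 system with all three
coordinates positive satisfies (x − w)·(xw − y²/4) = 0; moreover the case 4xw = y² with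
x ≠ w is impossible, so every such fixed point satisfies x = w. -/
theorem cod1_one_patch_positive_fixed_point_symmetric (b d c β : ℝ)
    (hdb : d < b) (hd : 0 < d) (hc : 0 < c) (hβ : 1 < β)
    (x y w : ℝ) (hx : 0 < x) (hy : 0 < y) (hw : 0 < w)
    (heq1 : b / (x + y + w) * (β * x ^ 2 + ((β + 1) / 2) * x * y + (β / 4) * y ^ 2)
      - (d + c * (x + y + w)) * x = 0)
    (heq2 : b / (x + y + w) * ((β / 2) * y ^ 2 + ((β + 1) / 2) * y * (x + w) + 2 * x * w)
      - (d + c * (x + y + w)) * y = 0)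
    (heq3 : b / (x + y + w) * (β * w ^ 2 + ((β + 1) / 2) * w * y + (β / 4) * y ^ 2)
      - (d + c * (x + y + w)) * w = 0) :
    (x - w) * (x * w - y ^ 2 / 4) = 0 ∧ ¬(4 * x * w = y ^ 2 ∧ x ≠ w) ∧ x = w := by
  have hN : (0:ℝ) < x + y + w := by linarith
  have hN' : x + y + w ≠ 0 := ne_of_gt hN
  have hb : (0:ℝ) < b := lt_trans hd hdb
  have e1 : b * (β * x ^ 2 + ((β + 1) / 2) * x * y + (β / 4) * y ^ 2)
      = (d + c * (x + y + w)) * x * (x + y + w) := by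
    field_simp at heq1; linear_combination (1/8) * heq1
  have e2 : b * ((β / 2) * y ^ 2 + ((β + 1) / 2) * y * (x + w) + 2 * x * w)
      = (d + c * (x + y + w)) * y * (x + y + w) := by
    field_simp at heq2; linear_combination (1/2) * heq2
  have e3 : b * (β * w ^ 2 + ((β + 1) / 2) * w * y + (β / 4) * y ^ 2)
      = (d + c * (x + y + w)) * w * (x + y + w) := by
    field_simp at heq3; linear_combination (1/8) * heq3
  have hxw : x = w := by
    by_contra h
    have hsub : x - w ≠ 0 := sub_ne_zero.mpr h
    have h4 : (x - w) * (b * (β * (x + w) + (β + 1) / 2 * y)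
        - (d + c * (x + y + w)) * (x + y + w)) = 0 := by
      linear_combination e1 - e3
    have hk : b * (β * (x + w) + (β + 1) / 2 * y)
        = (d + c * (x + y + w)) * (x + y + w) := by
      have := (mul_eq_zero.mp h4).resolve_left hsub
      linarith
    have h5 : b * (β / 4 * y ^ 2 - β * x * w) = 0 := by
      linear_combination e1 - x * hk
    have h5' : β / 4 * y ^ 2 - β * x * w = 0 :=
      (mul_eq_zero.mp h5).resolve_left (ne_of_gt hb)
    have hβ0 : β ≠ 0 := by linarith
    have hy2 : y ^ 2 = 4 * x * w := by
      have hβeq : β * (y ^ 2 - 4 * x * w) = 0 := by linear_combination 4 * h5'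
      have := (mul_eq_zero.mp hβeq).resolve_left hβ0
      linarith
    have h6 : b * (2 * x * w - (β - 1) / 2 * y * (x + w) - y ^ 2 / 2) = 0 := by
      linear_combination e2 - y * hk
    have h7 : 2 * x * w - (β - 1) / 2 * y * (x + w) - y ^ 2 / 2 = 0 :=
      (mul_eq_zero.mp h6).resolve_left (ne_of_gt hb)
    have h8 : (β - 1) / 2 * y * (x + w) = 0 := by
      linear_combination -h7 - (1/2) * hy2
    have hpos : 0 < (β - 1) / 2 * y * (x + w) :=
      mul_pos (mul_pos (by linarith) hy) (by linarith)
    linarith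
  refine ⟨by rw [hxw]; ring, ?_, hxw⟩
  rintro ⟨_, hne⟩
  exact hne hxw
end

section
/- Along any solution (x, y, w) of the one-patch COD1 system with positive coordinates satisfying x(t) > w(t), the function W₂(t) = ln((x(t) + w(t) + β y(t))/(x(t) − w(t))) satisfies (d/dt)W₂(t) = −(b(β − 1)/(2 N(t) (x(t) + w(t) + β y(t))))·β y(t)(x(t) + w(t)) ≤ 0, where N = x + y + w; in particular W₂ is nonincreasing along such solutions. -/
/-- Along any solution (x, y, w) of the one-patch COD1 system with positive
coordinates satisfying x(t) > w(t), the function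
W₂(t) = ln((x(t) + w(t) + β y(t))/(x(t) − w(t))) satisfies
(d/dt)W₂(t) = −(b(β − 1)/(2 N(t) (x(t) + w(t) + β y(t))))·β y(t)(x(t) + w(t)) ≤ 0,
where N = x + y + w; in particular W₂ is nonincreasing along such solutions. -/
theorem cod1_one_patch_lyapunov_W2 (b d c β : ℝ)
    (hdb : d < b) (hd : 0 < d) (hc : 0 < c) (hβ : 1 < β) (x y w : ℝ → ℝ)
    (hpos : ∀ t : ℝ, 0 ≤ t → 0 < x t ∧ 0 < y t ∧ 0 < w t)
    (hgt : ∀ t : ℝ, 0 ≤ t → w t < x t)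
    (hx : ∀ t : ℝ, 0 ≤ t → HasDerivAt x
      (b / (x t + y t + w t) * (β * (x t) ^ 2 + ((β + 1) / 2) * x t * y t + (β / 4) * (y t) ^ 2)
        - (d + c * (x t + y t + w t)) * x t) t)
    (hy : ∀ t : ℝ, 0 ≤ t → HasDerivAt y
      (b / (x t + y t + w t) * ((β / 2) * (y t) ^ 2 + ((β + 1) / 2) * y t * (x t + w t)
          + 2 * x t * w t)
        - (d + c * (x t + y t + w t)) * y t) t)
    (hw : ∀ t : ℝ, 0 ≤ t → HasDerivAt w
      (b / (x t + y t + w t) * (β * (w t) ^ 2 + ((β + 1) / 2) * w t * y t + (β / 4) * (y t) ^ 2)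
        - (d + c * (x t + y t + w t)) * w t) t) :
    (∀ t : ℝ, 0 ≤ t → HasDerivAt
      (fun s => Real.log ((x s + w s + β * y s) / (x s - w s)))
      (-(b * (β - 1) / (2 * (x t + y t + w t) * (x t + w t + β * y t)))
        * (β * y t * (x t + w t))) t) ∧
    (∀ t : ℝ, 0 ≤ t →
      -(b * (β - 1) / (2 * (x t + y t + w t) * (x t + w t + β * y t)))
        * (β * y t * (x t + w t)) ≤ 0) ∧
    (∀ s t : ℝ, 0 ≤ s → s ≤ t →
      Real.log ((x t + w t + β * y t) / (x t - w t))
        ≤ Real.log ((x s + w s + β * y s) / (x s - w s))) := by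
  have hb : 0 < b := hd.trans hdb
  have key : ∀ t : ℝ, 0 ≤ t → HasDerivAt
      (fun s => Real.log ((x s + w s + β * y s) / (x s - w s)))
      (-(b * (β - 1) / (2 * (x t + y t + w t) * (x t + w t + β * y t)))
        * (β * y t * (x t + w t))) t := by
    intro t ht
    obtain ⟨hx0, hy0, hw0⟩ := hpos t ht
    have hv : 0 < x t - w t := sub_pos.2 (hgt t ht)
    have hN : 0 < x t + y t + w t := by linarith
    have hu : 0 < x t + w t + β * y t := by nlinarith
    have hU : HasDerivAt (fun s => x s + w s + β * y s)
        ((b / (x t + y t + w t) * (β * (x t) ^ 2 + ((β + 1) / 2) * x t * y t + (β / 4) * (y t) ^ 2)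
          - (d + c * (x t + y t + w t)) * x t)
        + (b / (x t + y t + w t) * (β * (w t) ^ 2 + ((β + 1) / 2) * w t * y t + (β / 4) * (y t) ^ 2)
          - (d + c * (x t + y t + w t)) * w t)
        + β * (b / (x t + y t + w t) * ((β / 2) * (y t) ^ 2 + ((β + 1) / 2) * y t * (x t + w t)
          + 2 * x t * w t) - (d + c * (x t + y t + w t)) * y t)) t :=
      ((hx t ht).add (hw t ht)).add ((hy t ht).const_mul β)
    have hV : HasDerivAt (fun s => x s - w s)
        ((b / (x t + y t + w t) * (β * (x t) ^ 2 + ((β + 1) / 2) * x t * y t + (β / 4) * (y t) ^ 2)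
          - (d + c * (x t + y t + w t)) * x t)
        - (b / (x t + y t + w t) * (β * (w t) ^ 2 + ((β + 1) / 2) * w t * y t + (β / 4) * (y t) ^ 2)
          - (d + c * (x t + y t + w t)) * w t)) t := (hx t ht).sub (hw t ht)
    have hQ := hU.div hV (ne_of_gt hv)
    have hL := hQ.log (div_ne_zero (ne_of_gt hu) (ne_of_gt hv))
    convert hL using 1
    · rfl
    rw [Pi.div_apply]
    field_simp
    ring
  refine ⟨key, ?_, ?_⟩
  · intro t ht
    obtain ⟨hx0, hy0, hw0⟩ := hpos t ht
    have hN : 0 < x t + y t + w t := by linarith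
    have hu : 0 < x t + w t + β * y t := by nlinarith
    have hA : 0 ≤ b * (β - 1) / (2 * (x t + y t + w t) * (x t + w t + β * y t)) := by
      apply div_nonneg <;> nlinarith
    have hB : 0 ≤ β * y t * (x t + w t) := by positivity
    nlinarith
  · intro s t hs hst
    have hanti : AntitoneOn (fun s => Real.log ((x s + w s + β * y s) / (x s - w s)))
        (Set.Ici (0:ℝ)) := by
      apply antitoneOn_of_deriv_nonpos (convex_Ici 0)
      · exact fun τ hτ => ((key τ hτ).continuousAt).continuousWithinAt
      · intro τ hτ
        rw [interior_Ici] at hτ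
        exact ((key τ hτ.le).differentiableAt).differentiableWithinAt
      · intro τ hτ
        rw [interior_Ici] at hτ
        rw [(key τ (le_of_lt hτ)).deriv]
        obtain ⟨hx0, hy0, hw0⟩ := hpos τ (le_of_lt hτ)
        have hN : 0 < x τ + y τ + w τ := by linarith
        have hu : 0 < x τ + w τ + β * y τ := by nlinarith
        have hA : 0 ≤ b * (β - 1) / (2 * (x τ + y τ + w τ) * (x τ + w τ + β * y τ)) := by
          apply div_nonneg <;> nlinarith
        have hB : 0 ≤ β * y τ * (x τ + w τ) := by positivity
        nlinarith
    exact hanti hs (le_trans hs hst) hst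
end

section
/- Every fixed point (x, y, w) of the one-patch DOM system with all three coordinates positive satisfies β y² = 4xw and x + y = w, and equals the point ((b(β+1) − 2d)/(4c))·((√(β+1) − 1)/(√(β+1) + 1), 2/(√(β+1) + 1), 1); conversely this point is a fixed point of the system. -/
set_option maxHeartbeats 1600000 in
/-- Every fixed point (x, y, w) of the one-patch DOM system with all three
coordinates positive satisfies βy² = 4xw and x + y = w, and equals the point
((b(β+1) − 2d)/(4c))·((√(β+1) − 1)/(√(β+1) + 1), 2/(√(β+1) + 1), 1); conversely this
point is a fixed point of the system. -/
theorem dom_one_patch_positive_fixed_point (b d c β : ℝ)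
    (hdb : d < b) (hd : 0 < d) (hc : 0 < c) (hβ : 1 < β) :
    (∀ x y w : ℝ, 0 < x → 0 < y → 0 < w →
      b * β / (x + y + w) * (x + y / 2) ^ 2 - (d + c * (x + y + w)) * x = 0 →
      b / (x + y + w) * (β * y + 2 * w) * (x + y / 2) - (d + c * (x + y + w)) * y = 0 →
      b / (x + y + w) * (β * w ^ 2 + w * y + (β / 4) * y ^ 2)
        - (d + c * (x + y + w)) * w = 0 →
      (β * y ^ 2 = 4 * x * w ∧ x + y = w ∧
        x = (b * (β + 1) - 2 * d) / (4 * c)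
            * ((Real.sqrt (β + 1) - 1) / (Real.sqrt (β + 1) + 1)) ∧
        y = (b * (β + 1) - 2 * d) / (4 * c) * (2 / (Real.sqrt (β + 1) + 1)) ∧
        w = (b * (β + 1) - 2 * d) / (4 * c) * 1)) ∧
    (∀ x y w : ℝ,
      x = (b * (β + 1) - 2 * d) / (4 * c)
          * ((Real.sqrt (β + 1) - 1) / (Real.sqrt (β + 1) + 1)) →
      y = (b * (β + 1) - 2 * d) / (4 * c) * (2 / (Real.sqrt (β + 1) + 1)) →
      w = (b * (β + 1) - 2 * d) / (4 * c) * 1 →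
      (b * β / (x + y + w) * (x + y / 2) ^ 2 - (d + c * (x + y + w)) * x = 0 ∧
       b / (x + y + w) * (β * y + 2 * w) * (x + y / 2) - (d + c * (x + y + w)) * y = 0 ∧
       b / (x + y + w) * (β * w ^ 2 + w * y + (β / 4) * y ^ 2)
         - (d + c * (x + y + w)) * w = 0)) := by
  have hb : 0 < b := hd.trans hdb
  have hs0 : (0:ℝ) ≤ Real.sqrt (β + 1) := Real.sqrt_nonneg _
  have hs2 : Real.sqrt (β + 1) ^ 2 = β + 1 := Real.sq_sqrt (by linarith)
  set s := Real.sqrt (β + 1) with hsdef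
  have hs1 : 1 < s := by nlinarith
  have hs1p : s + 1 ≠ 0 := by linarith
  constructor
  · intro x y w hx hy hw h1 h2 h3
    have hn : (0:ℝ) < x + y + w := by linarith
    have e1 : b * β * (x + y / 2) ^ 2 = (d + c * (x + y + w)) * x * (x + y + w) := by
      field_simp at h1; linear_combination h1 / 4
    have e2 : b * (β * y + 2 * w) * (x + y / 2) = (d + c * (x + y + w)) * y * (x + y + w) := by
      field_simp at h2; linear_combination h2 / 2
    have e3 : b * (β * w ^ 2 + w * y + β / 4 * y ^ 2)
        = (d + c * (x + y + w)) * w * (x + y + w) := by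
      field_simp at h3; linear_combination h3 / 4
    have hp : (0:ℝ) < x + y / 2 := by linarith
    have hbp : b * (x + y / 2) ≠ 0 := by positivity
    have h4 : β * (x + y / 2) * y = (β * y + 2 * w) * x := by
      apply mul_left_cancel₀ hbp
      linear_combination y * e1 - x * e2
    have key1 : β * y ^ 2 = 4 * x * w := by linear_combination 2 * h4
    have hlam : b * (β * w + x + y) = (d + c * (x + y + w)) * (x + y + w) := by
      apply mul_left_cancel₀ hw.ne'
      linear_combination e3 - (b / 4) * key1
    have h5 : (β * y + 2 * w) * (x + y / 2) = (β * w + x + y) * y := by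
      apply mul_left_cancel₀ hb.ne'
      linear_combination e2 - y * hlam
    have h6 : (β - 1) * y * (x + y - w) = 0 := by
      linear_combination h5 + (1/2) * key1
    have key2 : x + y = w := by
      have hne : (β - 1) * y ≠ 0 := ne_of_gt (mul_pos (by linarith) hy)
      have := (mul_eq_zero.mp h6).resolve_left hne
      linarith
    have h8 : w * (b * (β + 1)) = w * (2 * d + 4 * c * w) := by
      linear_combination hlam + (d - b + c * (x + y + 3 * w)) * key2
    have h9 : b * (β + 1) = 2 * d + 4 * c * w := mul_left_cancel₀ hw.ne' h8
    have hw_eq : w = (b * (β + 1) - 2 * d) / (4 * c) := by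
      field_simp; linarith
    have h10 : ((s + 1) * y - 2 * w) * ((s - 1) * y + 2 * w) = 0 := by
      linear_combination y ^ 2 * hs2 + key1 + 4 * w * key2
    have h11 : (s + 1) * y = 2 * w := by
      have hne : (s - 1) * y + 2 * w ≠ 0 := by nlinarith
      have := (mul_eq_zero.mp h10).resolve_right hne
      linarith
    have hy_eq : y = (b * (β + 1) - 2 * d) / (4 * c) * (2 / (s + 1)) := by
      rw [← hw_eq]
      field_simp
      linear_combination h11
    have hx_eq : x = (b * (β + 1) - 2 * d) / (4 * c) * ((s - 1) / (s + 1)) := by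
      rw [← hw_eq]
      field_simp
      linear_combination (s + 1) * key2 - h11
    exact ⟨key1, key2, hx_eq, hy_eq, by rw [mul_one, hw_eq]⟩
  · intro x y w hx hy hw
    have hβ2 : β = s ^ 2 - 1 := by linarith
    obtain ⟨K, hKdef⟩ : ∃ K : ℝ, K = (b * (β + 1) - 2 * d) / (4 * c) := ⟨_, rfl⟩
    rw [← hKdef] at hx hy hw
    have hKc : 4 * c * K = b * (β + 1) - 2 * d := by
      have h4c : (4:ℝ) * c ≠ 0 := by positivity
      have := div_mul_cancel₀ (b * (β + 1) - 2 * d) h4c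
      rw [hKdef]
      linear_combination this
    have hKc2 : 4 * c * K = b * s ^ 2 - 2 * d := by linear_combination hKc - b * hs2
    have hKpos : 0 < K := by
      rw [hKdef]
      have h0 : 0 < b * (β + 1) - 2 * d := by nlinarith
      positivity
    subst hx hy hw
    have hN : K * ((s - 1) / (s + 1)) + K * (2 / (s + 1)) + K * 1 = 2 * K := by
      field_simp; ring
    have hd2 : d = b * s ^ 2 / 2 - 2 * c * K := by linarith
    rw [hN, hβ2, hd2]
    refine ⟨?_, ?_, ?_⟩ <;> · field_simp; ring
end

section
/- Let z = (x, y, w) : [0, ∞) → (0, ∞)³ be a global solution of the one-patch DOM system. If x(0) ≥ w(0), then z(t) converges to (ζ, 0, 0) as t → ∞. -/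
open Filter Set Topology


lemma stay_nonneg (f f' : ℝ → ℝ) (T : ℝ)
    (hd : ∀ t, T ≤ t → HasDerivAt f (f' t) t)
    (hbar : ∀ t, T ≤ t → f t = 0 → 0 < f' t)
    (h0 : 0 ≤ f T) : ∀ t, T ≤ t → 0 ≤ f t := by
  intro t1 ht1
  by_contra hneg
  push_neg at hneg
  have hTt1 : T < t1 := by
    rcases eq_or_lt_of_le ht1 with h | h
    · exact absurd h0 (by rw [h]; exact not_le.2 hneg)
    · exact h
  have hcont : ContinuousOn f (Set.Icc T t1) := fun s hs =>
    ((hd s hs.1).continuousAt).continuousWithinAt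
  set S := Set.Icc T t1 ∩ f ⁻¹' (Set.Ici 0) with hSdef
  have hSne : S.Nonempty := ⟨T, ⟨le_refl T, ht1⟩, h0⟩
  have hScl : IsClosed S := hcont.preimage_isClosed_of_isClosed isClosed_Icc isClosed_Ici
  have hScomp : IsCompact S := isCompact_Icc.of_isClosed_subset hScl Set.inter_subset_left
  have hsmem : sSup S ∈ S := hScomp.sSup_mem hSne
  set s := sSup S with hsdef
  have hsT : T ≤ s := hsmem.1.1
  have hfs : 0 ≤ f s := hsmem.2
  have hst1 : s < t1 := by
    rcases eq_or_lt_of_le hsmem.1.2 with h | h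
    · exact absurd (h ▸ hfs) (not_le.2 hneg)
    · exact h
  have key : ∀ r, s < r → r ≤ t1 → f r < 0 := by
    intro r hsr hrt1
    by_contra hfr
    push_neg at hfr
    have : r ∈ S := ⟨⟨hsT.trans hsr.le, hrt1⟩, hfr⟩
    exact absurd (le_csSup (hScomp.bddAbove) this) (not_le.2 hsr)
  have hIoc : Set.Ioc s t1 ∈ 𝓝[>] s := Ioc_mem_nhdsGT_of_mem ⟨le_refl s, hst1⟩
  rcases eq_or_lt_of_le hfs with hfs0 | hfs0
  · -- f s = 0, use positive derivative
    have hd' : 0 < f' s := hbar s hsT hfs0.symm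
    have hslope := hasDerivAt_iff_tendsto_slope.1 (hd s hsT)
    have hmono : 𝓝[>] s ≤ 𝓝[≠] s :=
      nhdsWithin_mono s (fun r hr => ne_of_gt hr)
    have hev : ∀ᶠ r in 𝓝[>] s, 0 < slope f s r :=
      (hslope.mono_left hmono).eventually (lt_mem_nhds hd')
    rcases (hev.and (eventually_of_mem hIoc (fun r hr => hr))).exists with ⟨r, hr1, hr2⟩
    have hrs : 0 < r - s := sub_pos.2 hr2.1
    have : 0 < f r - f s := by
      have := mul_pos hr1 hrs
      rwa [slope_def_field, div_mul_cancel₀] at this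
      exact hrs.ne'
    have := key r hr2.1 hr2.2
    nlinarith [hfs]
  · -- f s > 0, use continuity
    have hcs : ContinuousAt f s := (hd s hsT).continuousAt
    have hev : ∀ᶠ r in 𝓝[>] s, 0 < f r :=
      ((hcs.eventually (lt_mem_nhds hfs0)).filter_mono nhdsWithin_le_nhds)
    rcases (hev.and (eventually_of_mem hIoc (fun r hr => hr))).exists with ⟨r, hr1, hr2⟩
    exact absurd (key r hr2.1 hr2.2) (not_lt.2 hr1.le)

lemma cross_neg (f f' : ℝ → ℝ) (T ρ : ℝ) (hρ : 0 < ρ)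
    (hd : ∀ t, T ≤ t → HasDerivAt f (f' t) t)
    (hlt : ∀ t, T ≤ t → 0 ≤ f t → f' t ≤ -ρ) :
    ∃ t, T ≤ t ∧ f t < 0 := by
  by_contra h
  push_neg at h
  have h' : ∀ t, T ≤ t → f' t ≤ -ρ := fun t ht => hlt t ht (h t ht)
  set g : ℝ → ℝ := fun t => f t + ρ * t with hg
  have hganti : AntitoneOn g (Set.Ici T) := by
    apply antitoneOn_of_deriv_nonpos (convex_Ici T)
    · exact fun s hs => (((hd s hs).add ((hasDerivAt_id s).const_mul ρ)).continuousAt).continuousWithinAt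
    · intro s hs
      rw [interior_Ici] at hs
      exact (((hd s hs.le).add ((hasDerivAt_id s).const_mul ρ)).differentiableAt).differentiableWithinAt
    · intro s hs
      rw [interior_Ici] at hs
      have hgd : HasDerivAt g (f' s + ρ) s := by
        exact ((hd s hs.le).add ((hasDerivAt_id s).const_mul ρ)).congr_deriv (by simp)
      rw [hgd.deriv]
      linarith [h' s hs.le]
  have hfT : 0 ≤ f T := h T le_rfl
  have hdivpos : 0 ≤ (f T + 1) / ρ := div_nonneg (by linarith) hρ.le
  set t := T + (f T + 1) / ρ with ht
  have htT : T ≤ t := by rw [ht]; linarith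
  have := hganti (Set.self_mem_Ici) (Set.mem_Ici.2 htT) htT
  have hft : f t ≤ f T + ρ * T - ρ * t := by
    simp only [hg] at this
    linarith
  have hcancel : ρ * ((f T + 1) / ρ) = f T + 1 := mul_div_cancel₀ _ hρ.ne'
  have hft2 : f t ≤ -1 := by
    rw [ht] at hft ⊢
    nlinarith [hft]
  linarith [h t htT]

structure DOMS (b d c β : ℝ) (x y w : ℝ → ℝ) : Prop where
  hdb : d < b
  hd : 0 < d
  hc : 0 < c
  hβ : 1 < β
  hpos : ∀ t : ℝ, 0 ≤ t → 0 < x t ∧ 0 < y t ∧ 0 < w t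
  hx : ∀ t : ℝ, 0 ≤ t → HasDerivAt x
      (b * β / (x t + y t + w t) * (x t + y t / 2) ^ 2
        - (d + c * (x t + y t + w t)) * x t) t
  hy : ∀ t : ℝ, 0 ≤ t → HasDerivAt y
      (b / (x t + y t + w t) * (β * y t + 2 * w t) * (x t + y t / 2)
        - (d + c * (x t + y t + w t)) * y t) t
  hw : ∀ t : ℝ, 0 ≤ t → HasDerivAt w
      (b / (x t + y t + w t) * (β * (w t) ^ 2 + w t * y t + (β / 4) * (y t) ^ 2)
        - (d + c * (x t + y t + w t)) * w t) t

namespace DOMS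

variable {b d c β : ℝ} {x y w : ℝ → ℝ}

lemma posx (S : DOMS b d c β x y w) {t : ℝ} (ht : 0 ≤ t) : 0 < x t := (S.hpos t ht).1
lemma posy (S : DOMS b d c β x y w) {t : ℝ} (ht : 0 ≤ t) : 0 < y t := (S.hpos t ht).2.1
lemma posw (S : DOMS b d c β x y w) {t : ℝ} (ht : 0 ≤ t) : 0 < w t := (S.hpos t ht).2.2
lemma posN (S : DOMS b d c β x y w) {t : ℝ} (ht : 0 ≤ t) : 0 < x t + y t + w t := by
  have := S.hpos t ht; linarith [this.1, this.2.1, this.2.2]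
lemma neN (S : DOMS b d c β x y w) {t : ℝ} (ht : 0 ≤ t) : x t + y t + w t ≠ 0 :=
  (S.posN ht).ne'

/-- derivative of N = x+y+w -/
lemma hasDerivAt_N (S : DOMS b d c β x y w) {t : ℝ} (ht : 0 ≤ t) :
    HasDerivAt (fun t => x t + y t + w t)
      (((b - d - c * (x t + y t + w t)) * (x t + y t + w t) ^ 2
        + b * (β - 1) * ((x t + y t) ^ 2 + (w t) ^ 2)) / (x t + y t + w t)) t := by
  have h := ((S.hx t ht).add (S.hy t ht)).add (S.hw t ht)
  refine h.congr_deriv ?_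
  have hne := S.neN ht
  field_simp
  ring

/-- derivative of D = x - w -/
lemma hasDerivAt_D (S : DOMS b d c β x y w) {t : ℝ} (ht : 0 ≤ t) :
    HasDerivAt (fun t => x t - w t)
      ((b * β - d - c * (x t + y t + w t)) * (x t - w t)
        + b * (β - 1) * w t * y t / (x t + y t + w t)) t := by
  have h := (S.hx t ht).sub (S.hw t ht)
  refine h.congr_deriv ?_
  have hne := S.neN ht
  field_simp
  ring

/-- derivative of u = (w + y/2)/N -/
lemma hasDerivAt_u (S : DOMS b d c β x y w) {t : ℝ} (ht : 0 ≤ t) :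
    HasDerivAt (fun t => (w t + y t / 2) / (x t + y t + w t))
      (-(b * (β - 1) * w t * (x t + y t / 2) * (x t - w t + y t)) / (x t + y t + w t) ^ 3) t := by
  have hnum : HasDerivAt (fun t => w t + y t / 2)
      ((b / (x t + y t + w t) * (β * (w t) ^ 2 + w t * y t + (β / 4) * (y t) ^ 2)
        - (d + c * (x t + y t + w t)) * w t)
       + (b / (x t + y t + w t) * (β * y t + 2 * w t) * (x t + y t / 2)
        - (d + c * (x t + y t + w t)) * y t) / 2) t :=
    (S.hw t ht).add ((S.hy t ht).div_const 2)
  have hden := ((S.hx t ht).add (S.hy t ht)).add (S.hw t ht)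
  have h := hnum.div hden (S.neN ht)
  refine h.congr_deriv ?_
  simp only [Pi.add_apply]
  have hne := S.neN ht
  field_simp
  ring

/-- derivative of g = w/N -/
lemma hasDerivAt_g (S : DOMS b d c β x y w) {t : ℝ} (ht : 0 ≤ t) :
    HasDerivAt (fun t => w t / (x t + y t + w t))
      (b * β * (y t) ^ 2 / (4 * (x t + y t + w t) ^ 2)
        + b * w t * y t / (x t + y t + w t) ^ 2
        - b * β * w t * (x t + y t) / (x t + y t + w t) ^ 2
        + 2 * b * (β - 1) * (w t) ^ 2 * (x t + y t) / (x t + y t + w t) ^ 3) t := by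
  have hden := ((S.hx t ht).add (S.hy t ht)).add (S.hw t ht)
  have h := (S.hw t ht).div hden (S.neN ht)
  refine h.congr_deriv ?_
  simp only [Pi.add_apply]
  have hne := S.neN ht
  field_simp
  ring

/-- lower bound for N -/
lemma N_lower (S : DOMS b d c β x y w) : ∀ t, 0 ≤ t →
    min (x 0 + y 0 + w 0) ((b - d) / c) ≤ x t + y t + w t := by
  set m := min (x 0 + y 0 + w 0) ((b - d) / c) with hm
  have hmN0 : m ≤ x 0 + y 0 + w 0 := min_le_left _ _
  have hmbd : c * m ≤ b - d := by
    have : m ≤ (b - d) / c := min_le_right _ _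
    rw [le_div_iff₀ S.hc] at this; linarith
  intro t ht
  have := stay_nonneg (fun t => x t + y t + w t - m)
    (fun t => ((b - d - c * (x t + y t + w t)) * (x t + y t + w t) ^ 2
        + b * (β - 1) * ((x t + y t) ^ 2 + (w t) ^ 2)) / (x t + y t + w t)) 0
    (fun s hs => (S.hasDerivAt_N hs).sub_const m)
    (fun s hs h0 => by
      have h0' : x s + y s + w s - m = 0 := h0
      have hNs : x s + y s + w s = m := by linarith
      show 0 < ((b - d - c * (x s + y s + w s)) * (x s + y s + w s) ^ 2
        + b * (β - 1) * ((x s + y s) ^ 2 + (w s) ^ 2)) / (x s + y s + w s)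
      have hw' := S.posw hs
      have hx' := S.posx hs
      have hy' := S.posy hs
      apply div_pos _ (S.posN hs)
      have h1 : 0 ≤ (b - d - c * (x s + y s + w s)) * (x s + y s + w s) ^ 2 := by
        apply mul_nonneg _ (sq_nonneg _)
        rw [hNs]; linarith
      have h2 : 0 < b * (β - 1) * ((x s + y s) ^ 2 + (w s) ^ 2) := by
        have hb : 0 < b := lt_trans S.hd S.hdb
        have : 0 < (x s + y s) ^ 2 + (w s) ^ 2 := by positivity
        have : 0 < β - 1 := by linarith [S.hβ]
        positivity
      linarith)
    (by simp; linarith) t ht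
  have : 0 ≤ x t + y t + w t - m := this
  linarith

/-- upper bound for N -/
lemma N_upper (S : DOMS b d c β x y w) : ∀ t, 0 ≤ t →
    x t + y t + w t ≤ max (x 0 + y 0 + w 0) ((b * β - d) / c) := by
  set M := max (x 0 + y 0 + w 0) ((b * β - d) / c) with hM
  have hMN0 : x 0 + y 0 + w 0 ≤ M := le_max_left _ _
  have hMbd : b * β - d ≤ c * M := by
    have : (b * β - d) / c ≤ M := le_max_right _ _
    rw [div_le_iff₀ S.hc] at this; linarith
  intro t ht
  have := stay_nonneg (fun t => M - (x t + y t + w t))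
    (fun t => -(((b - d - c * (x t + y t + w t)) * (x t + y t + w t) ^ 2
        + b * (β - 1) * ((x t + y t) ^ 2 + (w t) ^ 2)) / (x t + y t + w t))) 0
    (fun s hs => (S.hasDerivAt_N hs).const_sub M)
    (fun s hs h0 => by
      have h0' : M - (x s + y s + w s) = 0 := h0
      have hNs : x s + y s + w s = M := by linarith
      show 0 < -(((b - d - c * (x s + y s + w s)) * (x s + y s + w s) ^ 2
        + b * (β - 1) * ((x s + y s) ^ 2 + (w s) ^ 2)) / (x s + y s + w s))
      have hw' := S.posw hs
      have hx' := S.posx hs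
      have hy' := S.posy hs
      have hb : 0 < b := lt_trans S.hd S.hdb
      have hβ1 : 0 < β - 1 := by linarith [S.hβ]
      rw [neg_pos]
      apply div_neg_of_neg_of_pos _ (S.posN hs)
      have hiden : (x s + y s) ^ 2 + (w s) ^ 2 = M ^ 2 - 2 * (w s) * (x s + y s) := by
        rw [← hNs]; ring
      have hwxy : 0 < w s * (x s + y s) := by positivity
      have key : (b - d - c * (x s + y s + w s)) * (x s + y s + w s) ^ 2
          + b * (β - 1) * ((x s + y s) ^ 2 + (w s) ^ 2)
          = (b * β - d - c * M) * M ^ 2 - 2 * (b * (β - 1)) * (w s * (x s + y s)) := by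
        rw [hNs, hiden]; ring
      rw [key]
      have t1 : (b * β - d - c * M) * M ^ 2 ≤ 0 :=
        mul_nonpos_of_nonpos_of_nonneg (by linarith) (sq_nonneg M)
      have t2 : 0 < 2 * (b * (β - 1)) * (w s * (x s + y s)) := by positivity
      linarith)
    (by simp; linarith) t ht
  have : 0 ≤ M - (x t + y t + w t) := this
  linarith

/-- x - w stays nonnegative -/
lemma D_nonneg (S : DOMS b d c β x y w) (h0 : w 0 ≤ x 0) : ∀ t, 0 ≤ t → 0 ≤ x t - w t := by
  apply stay_nonneg (fun t => x t - w t)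
    (fun t => (b * β - d - c * (x t + y t + w t)) * (x t - w t)
        + b * (β - 1) * w t * y t / (x t + y t + w t))
    0 (fun s hs => S.hasDerivAt_D hs)
    (fun s hs hD => by
      have hD' : x s - w s = 0 := hD
      show 0 < (b * β - d - c * (x s + y s + w s)) * (x s - w s)
        + b * (β - 1) * w s * y s / (x s + y s + w s)
      rw [hD', mul_zero, zero_add]
      have hb : 0 < b := lt_trans S.hd S.hdb
      have hβ1 : 0 < β - 1 := by linarith [S.hβ]
      have := S.posw hs; have := S.posy hs; have := S.posN hs
      positivity)
    (by simp; linarith)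
lemma no_uniform_q (S : DOMS b d c β x y w) (h0 : w 0 ≤ x 0) {δ : ℝ} (hδ : 0 < δ)
    (hq : ∀ t, 0 ≤ t → δ ≤ w t + y t / 2) : False := by
  have hb : 0 < b := lt_trans S.hd S.hdb
  have hβ1 : 0 < β - 1 := by linarith [S.hβ]
  have hβ0 : 0 < β := by linarith [S.hβ]
  set m := min (x 0 + y 0 + w 0) ((b - d) / c) with hmdef
  set M := max (x 0 + y 0 + w 0) ((b * β - d) / c) with hMdef
  have hm : 0 < m := lt_min (S.posN le_rfl) (div_pos (by linarith [S.hdb]) S.hc)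
  have hM : 0 < M := lt_of_lt_of_le (S.posN le_rfl) (le_max_left _ _)
  have hNm : ∀ t, 0 ≤ t → m ≤ x t + y t + w t := S.N_lower
  have hNM : ∀ t, 0 ≤ t → x t + y t + w t ≤ M := S.N_upper
  clear_value m M
  have hmM : m ≤ M := le_trans (hNm 0 le_rfl) (hNM 0 le_rfl)
  -- step 1 : w is bounded below by ρ * m
  set c2 := b * β / (4 * M ^ 2) with hc2def
  set C2 := b * β * M / m ^ 2 with hC2def
  have hc2 : 0 < c2 := by
    rw [hc2def]; exact div_pos (mul_pos hb hβ0) (by nlinarith)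
  have hC2 : 0 < C2 := by
    rw [hC2def]; exact div_pos (mul_pos (mul_pos hb hβ0) hM) (by nlinarith)
  clear_value c2 C2
  set ws := min (δ / 2) (c2 * δ ^ 2 / (2 * C2)) with hwsdef
  have hws : 0 < ws := by
    rw [hwsdef]
    exact lt_min (by linarith) (div_pos (mul_pos hc2 (pow_pos hδ 2)) (by linarith))
  have hws2 : ws ≤ δ / 2 := by rw [hwsdef]; exact min_le_left _ _
  have hws3 : ws ≤ c2 * δ ^ 2 / (2 * C2) := by rw [hwsdef]; exact min_le_right _ _
  clear_value ws
  set ρ := min (w 0 / (x 0 + y 0 + w 0)) (ws / M) with hρdef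
  have hρ : 0 < ρ := by
    rw [hρdef]
    exact lt_min (div_pos (S.posw le_rfl) (S.posN le_rfl)) (div_pos hws hM)
  have hρ1 : ρ ≤ w 0 / (x 0 + y 0 + w 0) := by rw [hρdef]; exact min_le_left _ _
  have hρ2 : ρ ≤ ws / M := by rw [hρdef]; exact min_le_right _ _
  clear_value ρ
  have hglow : ∀ t, 0 ≤ t → 0 ≤ w t / (x t + y t + w t) - ρ := by
    apply stay_nonneg _
      (fun t => b * β * (y t) ^ 2 / (4 * (x t + y t + w t) ^ 2)
        + b * w t * y t / (x t + y t + w t) ^ 2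
        - b * β * w t * (x t + y t) / (x t + y t + w t) ^ 2
        + 2 * b * (β - 1) * (w t) ^ 2 * (x t + y t) / (x t + y t + w t) ^ 3)
      0 (fun s hs => (S.hasDerivAt_g hs).sub_const ρ)
    · intro s hs hgs
      have hgs' : w s / (x s + y s + w s) - ρ = 0 := hgs
      have hNpos := S.posN hs
      have hws' : w s = ρ * (x s + y s + w s) := by
        field_simp at hgs'
        linarith [hgs']
      have hwle : w s ≤ ws := by
        rw [hws']
        calc ρ * (x s + y s + w s) ≤ (ws / M) * M := by
              apply mul_le_mul hρ2 (hNM s hs) hNpos.le (div_nonneg hws.le hM.le)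
          _ = ws := by field_simp
      have hylow : δ ≤ y s := by
        have := hq s hs
        linarith
      show 0 < b * β * (y s) ^ 2 / (4 * (x s + y s + w s) ^ 2)
        + b * w s * y s / (x s + y s + w s) ^ 2
        - b * β * w s * (x s + y s) / (x s + y s + w s) ^ 2
        + 2 * b * (β - 1) * (w s) ^ 2 * (x s + y s) / (x s + y s + w s) ^ 3
      have hx' := S.posx hs; have hy' := S.posy hs; have hw' := S.posw hs
      have hN2 : 0 < (x s + y s + w s) ^ 2 := pow_pos hNpos 2
      have hN2M : (x s + y s + w s) ^ 2 ≤ M ^ 2 := pow_le_pow_left₀ hNpos.le (hNM s hs) 2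
      have hm2N : m ^ 2 ≤ (x s + y s + w s) ^ 2 := pow_le_pow_left₀ hm.le (hNm s hs) 2
      have hbβ : 0 < b * β := mul_pos hb hβ0
      have bT1 : c2 * δ ^ 2 ≤ b * β * (y s) ^ 2 / (4 * (x s + y s + w s) ^ 2) := by
        have he : c2 * δ ^ 2 = b * β * δ ^ 2 / (4 * M ^ 2) := by rw [hc2def]; ring
        rw [he]
        have hδy : δ ^ 2 ≤ (y s) ^ 2 := pow_le_pow_left₀ hδ.le hylow 2
        apply div_le_div₀ (by positivity)
          (by linarith [mul_le_mul_of_nonneg_left hδy hbβ.le]) (by linarith) (by linarith)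
      have bT2 : 0 ≤ b * w s * y s / (x s + y s + w s) ^ 2 := by positivity
      have bT3 : b * β * w s * (x s + y s) / (x s + y s + w s) ^ 2 ≤ C2 * ws := by
        have he : C2 * ws = b * β * ws * M / m ^ 2 := by rw [hC2def]; ring
        rw [he]
        have hxyM : x s + y s ≤ M := by linarith [hNM s hs]
        have hmain : b * β * (w s) * (x s + y s) ≤ b * β * ws * M := by
          have := mul_le_mul_of_nonneg_left
            (mul_le_mul hwle hxyM (by linarith) hws.le) hbβ.le
          linarith [this]
        apply div_le_div₀ (le_of_lt (mul_pos (mul_pos hbβ hws) hM)) hmain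
          (pow_pos hm 2) hm2N
      have bT4 : 0 ≤ 2 * b * (β - 1) * (w s) ^ 2 * (x s + y s) / (x s + y s + w s) ^ 3 := by
        positivity
      have hwsC : C2 * ws ≤ c2 * δ ^ 2 / 2 := by
        have h1 := hws3
        rw [le_div_iff₀ (by linarith)] at h1
        linarith
      have hpos : 0 < c2 * δ ^ 2 := by positivity
      linarith
    · show 0 ≤ w 0 / (x 0 + y 0 + w 0) - ρ
      linarith
  have hwlow : ∀ t, 0 ≤ t → ρ * m ≤ w t := by
    intro t ht
    have h1 := hglow t ht
    have hNpos := S.posN ht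
    have h2 : ρ * (x t + y t + w t) ≤ w t := by
      have h3 : ρ ≤ w t / (x t + y t + w t) := by linarith
      calc ρ * (x t + y t + w t) ≤ (w t / (x t + y t + w t)) * (x t + y t + w t) :=
            mul_le_mul_of_nonneg_right h3 hNpos.le
        _ = w t := by field_simp
    calc ρ * m ≤ ρ * (x t + y t + w t) := mul_le_mul_of_nonneg_left (hNm t ht) hρ.le
      _ ≤ w t := h2
  -- step 2 : exponential growth of φ = 1/2 - u
  set k := b * (β - 1) * ρ * m ^ 2 / M ^ 2 with hkdef
  have hk : 0 < k := by
    rw [hkdef]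
    exact div_pos (mul_pos (mul_pos (mul_pos hb hβ1) hρ) (pow_pos hm 2)) (pow_pos hM 2)
  have hkM : k * M ^ 2 = b * (β - 1) * ρ * m ^ 2 := by
    rw [hkdef]; field_simp
  clear_value k
  have hD := S.D_nonneg h0
  have hφd : ∀ t, 0 ≤ t → HasDerivAt (fun t => 1/2 - (w t + y t / 2) / (x t + y t + w t))
      (b * (β - 1) * w t * (x t + y t / 2) * (x t - w t + y t) / (x t + y t + w t) ^ 3) t := by
    intro t ht
    have h := (S.hasDerivAt_u ht).const_sub (1/2 : ℝ)
    refine h.congr_deriv ?_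
    ring
  have hφdpos : ∀ t, 0 ≤ t →
      0 < b * (β - 1) * w t * (x t + y t / 2) * (x t - w t + y t) / (x t + y t + w t) ^ 3 := by
    intro t ht
    apply div_pos _ (pow_pos (S.posN ht) 3)
    have h1 := S.posw ht; have h2 := S.posx ht; have h3 := S.posy ht
    have h4 : 0 < x t - w t + y t := by linarith [hD t ht]
    have h5 : 0 < x t + y t / 2 := by linarith
    exact mul_pos (mul_pos (mul_pos (mul_pos hb hβ1) h1) h5) h4
  have hφnn : ∀ t, 0 ≤ t → 0 ≤ 1/2 - (w t + y t / 2) / (x t + y t + w t) := by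
    intro t ht
    have hNpos := S.posN ht
    have h : (w t + y t / 2) / (x t + y t + w t) ≤ 1/2 := by
      rw [div_le_iff₀ hNpos]
      linarith [hD t ht]
    linarith
  have hφlt : ∀ t, 0 ≤ t → 1/2 - (w t + y t / 2) / (x t + y t + w t) < 1/2 := by
    intro t ht
    have h : 0 < (w t + y t / 2) / (x t + y t + w t) :=
      div_pos (by linarith [S.posw ht, S.posy ht]) (S.posN ht)
    linarith
  have hkey : ∀ t, 0 ≤ t → k * (1/2 - (w t + y t / 2) / (x t + y t + w t))
      ≤ b * (β - 1) * w t * (x t + y t / 2) * (x t - w t + y t) / (x t + y t + w t) ^ 3 := by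
    intro t ht
    have hNpos := S.posN ht
    have hx' := S.posx ht; have hy' := S.posy ht; have hw' := S.posw ht
    have hDt := hD t ht
    have hφval : 1/2 - (w t + y t / 2) / (x t + y t + w t)
        = (x t - w t) / (2 * (x t + y t + w t)) := by
      field_simp
      ring
    rw [hφval, ← mul_div_assoc]
    rw [div_le_div_iff₀ (by linarith) (pow_pos hNpos 3)]
    have hN2M : (x t + y t + w t) ^ 2 ≤ M ^ 2 := pow_le_pow_left₀ hNpos.le (hNM t ht) 2
    have c1 : k * (x t - w t) * (x t + y t + w t) ^ 3
        ≤ k * (x t - w t) * ((x t + y t + w t) * M ^ 2) := by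
      have h3 : (x t + y t + w t) ^ 3 ≤ (x t + y t + w t) * M ^ 2 := by
        calc (x t + y t + w t) ^ 3 = (x t + y t + w t) * (x t + y t + w t) ^ 2 := by ring
          _ ≤ (x t + y t + w t) * M ^ 2 := mul_le_mul_of_nonneg_left hN2M hNpos.le
      exact mul_le_mul_of_nonneg_left h3 (mul_nonneg hk.le hDt)
    have c2 : k * (x t - w t) * ((x t + y t + w t) * M ^ 2)
        = b * (β - 1) * ρ * m ^ 2 * (x t - w t) * (x t + y t + w t) := by
      linear_combination (x t - w t) * (x t + y t + w t) * hkM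
    have hp : m / 2 ≤ x t + y t / 2 := by linarith [hNm t ht]
    have e : ρ * m * (m / 2) * (x t - w t) ≤ w t * (x t + y t / 2) * (x t - w t + y t) := by
      have l1 : ρ * m * (m / 2) ≤ w t * (x t + y t / 2) :=
        mul_le_mul (hwlow t ht) hp (by linarith) hw'.le
      exact mul_le_mul l1 (by linarith) hDt (mul_nonneg hw'.le (by linarith))
    have c3 : b * (β - 1) * ρ * m ^ 2 * (x t - w t) * (x t + y t + w t)
        ≤ b * (β - 1) * w t * (x t + y t / 2) * (x t - w t + y t) * (2 * (x t + y t + w t)) := by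
      have h6 := mul_le_mul_of_nonneg_left e
        (le_of_lt (mul_pos (mul_pos (mul_pos hb hβ1) hNpos) two_pos))
      linarith [h6]
    linarith [c1, c2, c3]
  -- the auxiliary function ψ = φ * exp (-k t) is monotone
  have hψd : ∀ t, 0 ≤ t → HasDerivAt
      (fun t => (1/2 - (w t + y t / 2) / (x t + y t + w t)) * Real.exp (-(k * t)))
      ((b * (β - 1) * w t * (x t + y t / 2) * (x t - w t + y t) / (x t + y t + w t) ^ 3
        - k * (1/2 - (w t + y t / 2) / (x t + y t + w t))) * Real.exp (-(k * t))) t := by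
    intro t ht
    have h1 : HasDerivAt (fun t : ℝ => -(k * t)) (-k) t := by
      exact ((hasDerivAt_id t).const_mul k).neg.congr_deriv (by simp)
    have hexp := h1.exp
    have h := (hφd t ht).mul hexp
    refine h.congr_deriv ?_
    ring
  have hψmono : MonotoneOn
      (fun t => (1/2 - (w t + y t / 2) / (x t + y t + w t)) * Real.exp (-(k * t)))
      (Ici (0:ℝ)) := by
    apply monotoneOn_of_deriv_nonneg (convex_Ici 0)
    · exact fun s hs => (hψd s hs).continuousAt.continuousWithinAt
    · intro s hs
      rw [interior_Ici] at hs
      exact (hψd s (le_of_lt hs)).differentiableAt.differentiableWithinAt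
    · intro s hs
      rw [interior_Ici] at hs
      rw [(hψd s (le_of_lt hs)).deriv]
      exact mul_nonneg (sub_nonneg.2 (hkey s (le_of_lt hs))) (Real.exp_pos _).le
  have hφmono : StrictMonoOn (fun t => 1/2 - (w t + y t / 2) / (x t + y t + w t))
      (Ici (0:ℝ)) := by
    apply strictMonoOn_of_deriv_pos (convex_Ici 0)
    · exact fun s hs => (hφd s hs).continuousAt.continuousWithinAt
    · intro s hs
      rw [interior_Ici] at hs
      rw [(hφd s (le_of_lt hs)).deriv]
      exact hφdpos s (le_of_lt hs)
  have hφ1 : 0 < 1/2 - (w 1 + y 1 / 2) / (x 1 + y 1 + w 1) := by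
    have h := hφmono (mem_Ici.2 le_rfl) (mem_Ici.2 zero_le_one) zero_lt_one
    have h00 := hφnn 0 le_rfl
    simp only at h
    linarith
  set ψ1 := (1/2 - (w 1 + y 1 / 2) / (x 1 + y 1 + w 1)) * Real.exp (-(k * 1)) with hψ1def
  have hψ1 : 0 < ψ1 := mul_pos hφ1 (Real.exp_pos _)
  set t1 := max 1 ((1/2) / ψ1 / k) with ht1def
  have ht11 : (1:ℝ) ≤ t1 := le_max_left _ _
  have ht10 : (0:ℝ) ≤ t1 := by linarith
  have hfin1 : ψ1 ≤ (1/2 - (w t1 + y t1 / 2) / (x t1 + y t1 + w t1)) * Real.exp (-(k * t1)) :=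
    hψmono (mem_Ici.2 zero_le_one) (mem_Ici.2 ht10) ht11
  have hexpid : Real.exp (-(k * t1)) * Real.exp (k * t1) = 1 := by
    rw [← Real.exp_add]; simp
  have hgrow : ψ1 * Real.exp (k * t1)
      ≤ 1/2 - (w t1 + y t1 / 2) / (x t1 + y t1 + w t1) := by
    have hE : (0:ℝ) < Real.exp (k * t1) := Real.exp_pos _
    calc ψ1 * Real.exp (k * t1)
        ≤ ((1/2 - (w t1 + y t1 / 2) / (x t1 + y t1 + w t1)) * Real.exp (-(k * t1)))
            * Real.exp (k * t1) := mul_le_mul_of_nonneg_right hfin1 hE.le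
      _ = (1/2 - (w t1 + y t1 / 2) / (x t1 + y t1 + w t1))
            * (Real.exp (-(k * t1)) * Real.exp (k * t1)) := by ring
      _ = _ := by rw [hexpid, mul_one]
  have hbig : (1/2) / ψ1 < Real.exp (k * t1) := by
    have h1 : (1/2) / ψ1 / k ≤ t1 := le_max_right _ _
    have h2 : (1/2) / ψ1 ≤ k * t1 := by
      rw [div_le_iff₀ hk] at h1
      linarith
    linarith [Real.add_one_le_exp (k * t1), hk.le]
  have heq : ψ1 * ((1/2) / ψ1) = 1/2 := by field_simp
  have hcontr : 1/2 < 1/2 - (w t1 + y t1 / 2) / (x t1 + y t1 + w t1) := by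
    have h := mul_lt_mul_of_pos_left hbig hψ1
    calc (1:ℝ)/2 = ψ1 * ((1/2) / ψ1) := heq.symm
      _ < ψ1 * Real.exp (k * t1) := h
      _ ≤ _ := hgrow
  linarith [hφlt t1 ht10]

end DOMS

set_option maxHeartbeats 1600000 in
/-- Let z = (x, y, w) : [0, ∞) → (0, ∞)³ be a global solution of the
one-patch DOM system. If x(0) ≥ w(0), then z(t) → (ζ, 0, 0) as t → ∞. -/
theorem dom_one_patch_convergence_A (b d c β : ℝ) (hdb : d < b) (hd : 0 < d) (hc : 0 < c)
    (hβ : 1 < β) (x y w : ℝ → ℝ)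
    (hpos : ∀ t : ℝ, 0 ≤ t → 0 < x t ∧ 0 < y t ∧ 0 < w t)
    (hx : ∀ t : ℝ, 0 ≤ t → HasDerivAt x
      (b * β / (x t + y t + w t) * (x t + y t / 2) ^ 2
        - (d + c * (x t + y t + w t)) * x t) t)
    (hy : ∀ t : ℝ, 0 ≤ t → HasDerivAt y
      (b / (x t + y t + w t) * (β * y t + 2 * w t) * (x t + y t / 2)
        - (d + c * (x t + y t + w t)) * y t) t)
    (hw : ∀ t : ℝ, 0 ≤ t → HasDerivAt w
      (b / (x t + y t + w t) * (β * (w t) ^ 2 + w t * y t + (β / 4) * (y t) ^ 2)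
        - (d + c * (x t + y t + w t)) * w t) t)
    (h0 : w 0 ≤ x 0) :
    Tendsto (fun t => (x t, y t, w t)) atTop (nhds (((b * β - d) / c, 0, 0) : ℝ × ℝ × ℝ)) := by
  have S : DOMS b d c β x y w := ⟨hdb, hd, hc, hβ, hpos, hx, hy, hw⟩
  have hb : 0 < b := lt_trans hd hdb
  have hβ1 : 0 < β - 1 := by linarith
  set m := min (x 0 + y 0 + w 0) ((b - d) / c) with hmdef
  set M := max (x 0 + y 0 + w 0) ((b * β - d) / c) with hMdef
  have hm : 0 < m := lt_min (S.posN le_rfl) (div_pos (by linarith) hc)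
  have hM : 0 < M := lt_of_lt_of_le (S.posN le_rfl) (le_max_left _ _)
  have hNm : ∀ t, 0 ≤ t → m ≤ x t + y t + w t := S.N_lower
  have hNM : ∀ t, 0 ≤ t → x t + y t + w t ≤ M := S.N_upper
  clear_value m M
  -- the frequency u = q/N is antitone on [0,∞) and tends to a limit L
  have hanti : AntitoneOn (fun t => (w t + y t / 2) / (x t + y t + w t)) (Ici (0:ℝ)) := by
    apply antitoneOn_of_deriv_nonpos (convex_Ici 0)
    · exact fun s hs => (S.hasDerivAt_u hs).continuousAt.continuousWithinAt
    · intro s hs; rw [interior_Ici] at hs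
      exact (S.hasDerivAt_u (le_of_lt hs)).differentiableAt.differentiableWithinAt
    · intro s hs; rw [interior_Ici] at hs
      rw [(S.hasDerivAt_u (le_of_lt hs)).deriv]
      have h1 := S.posw hs.le
      have h2 := S.posx hs.le
      have h3 := S.posy hs.le
      have hD := S.D_nonneg h0 s hs.le
      apply div_nonpos_of_nonpos_of_nonneg _ (pow_pos (S.posN hs.le) 3).le
      have h4 : 0 ≤ b * (β - 1) * w s * (x s + y s / 2) * (x s - w s + y s) := by
        apply mul_nonneg
        apply mul_nonneg
        apply mul_nonneg (mul_nonneg hb.le hβ1.le) h1.le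
        all_goals linarith
      linarith
  set v : ℝ → ℝ := fun t => (w (max t 0) + y (max t 0) / 2)
      / (x (max t 0) + y (max t 0) + w (max t 0)) with hvdef
  have hvanti : Antitone v := by
    intro s t hst
    exact hanti (mem_Ici.2 (le_max_right s 0)) (mem_Ici.2 (le_max_right t 0))
      (max_le_max hst le_rfl)
  have hvnn : ∀ t, 0 ≤ v t := by
    intro t
    have h1 := S.posw (le_max_right t 0)
    have h2 := S.posy (le_max_right t 0)
    exact le_of_lt (div_pos (by linarith) (S.posN (le_max_right t 0)))
  have hbdd : BddBelow (Set.range v) := ⟨0, by rintro _ ⟨t, rfl⟩; exact hvnn t⟩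
  set L := ⨅ t, v t with hLdef
  have hvL : Tendsto v atTop (𝓝 L) := tendsto_atTop_ciInf hvanti hbdd
  have huv : v =ᶠ[atTop] (fun t => (w t + y t / 2) / (x t + y t + w t)) := by
    filter_upwards [eventually_ge_atTop (0:ℝ)] with t ht
    rw [hvdef]
    simp only [max_eq_left ht]
  have huL : Tendsto (fun t => (w t + y t / 2) / (x t + y t + w t)) atTop (𝓝 L) :=
    hvL.congr' huv
  have hL0 : 0 ≤ L := le_ciInf hvnn
  have hLv : ∀ t, 0 ≤ t → L ≤ (w t + y t / 2) / (x t + y t + w t) := by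
    intro t ht
    have h1 := ciInf_le hbdd t
    rw [hLdef]
    calc (⨅ t, v t) ≤ v t := h1
      _ = _ := by rw [hvdef]; simp only [max_eq_left ht]
  clear_value v L
  -- the limit L must be zero
  have hLeq : L = 0 := by
    by_contra hne
    have hL : 0 < L := lt_of_le_of_ne hL0 (Ne.symm hne)
    apply S.no_uniform_q h0 (mul_pos hL hm)
    intro t ht
    have h1 := hLv t ht
    have hNpos := S.posN ht
    calc L * m ≤ L * (x t + y t + w t) := mul_le_mul_of_nonneg_left (hNm t ht) hL.le
      _ ≤ ((w t + y t / 2) / (x t + y t + w t)) * (x t + y t + w t) :=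
          mul_le_mul_of_nonneg_right h1 hNpos.le
      _ = w t + y t / 2 := by field_simp
  rw [hLeq] at huL
  -- w and y tend to zero
  have hqM : Tendsto (fun t => ((w t + y t / 2) / (x t + y t + w t)) * M) atTop (𝓝 0) := by
    have h := huL.mul_const M; rwa [zero_mul] at h
  have hqle : ∀ t, 0 ≤ t → w t + y t / 2 ≤ ((w t + y t / 2) / (x t + y t + w t)) * M := by
    intro t ht
    have hNpos := S.posN ht
    have hq0 : 0 ≤ (w t + y t / 2) / (x t + y t + w t) :=
      le_of_lt (div_pos (by linarith [S.posw ht, S.posy ht]) hNpos)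
    calc w t + y t / 2 = ((w t + y t / 2) / (x t + y t + w t)) * (x t + y t + w t) := by
          field_simp
      _ ≤ _ := mul_le_mul_of_nonneg_left (hNM t ht) hq0
  have hw0' : Tendsto w atTop (𝓝 0) := by
    apply tendsto_of_tendsto_of_tendsto_of_le_of_le' tendsto_const_nhds hqM
    · filter_upwards [eventually_ge_atTop (0:ℝ)] with t ht; exact (S.posw ht).le
    · filter_upwards [eventually_ge_atTop (0:ℝ)] with t ht
      have := hqle t ht; linarith [S.posy ht]
  have hy0' : Tendsto y atTop (𝓝 0) := by
    have h2 : Tendsto (fun t => 2 * (((w t + y t / 2) / (x t + y t + w t)) * M)) atTop (𝓝 0) := by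
      have h := hqM.const_mul 2; rwa [mul_zero] at h
    apply tendsto_of_tendsto_of_tendsto_of_le_of_le' tendsto_const_nhds h2
    · filter_upwards [eventually_ge_atTop (0:ℝ)] with t ht; exact (S.posy ht).le
    · filter_upwards [eventually_ge_atTop (0:ℝ)] with t ht
      have := hqle t ht; linarith [S.posw ht]
  -- N tends to ζ
  have hζc : c * ((b * β - d) / c) = b * β - d := by field_simp
  have hNζ : Tendsto (fun t => x t + y t + w t) atTop (𝓝 ((b * β - d) / c)) := by
    rw [Metric.tendsto_atTop]
    intro ε hε
    have hε2 : 0 < ε / 2 := by linarith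
    -- upper trap
    have key_up : ∀ s, 0 ≤ s → (b * β - d) / c + ε / 2 ≤ x s + y s + w s →
        ((b - d - c * (x s + y s + w s)) * (x s + y s + w s) ^ 2
          + b * (β - 1) * ((x s + y s) ^ 2 + (w s) ^ 2)) / (x s + y s + w s)
        ≤ -(c * (ε / 2) * m) := by
      intro s hs hge
      have hNpos := S.posN hs
      rw [div_le_iff₀ hNpos]
      have hsq : (x s + y s) ^ 2 + (w s) ^ 2 ≤ (x s + y s + w s) ^ 2 := by
        nlinarith [S.posw hs, S.posx hs, S.posy hs]
      have hb1 : 0 ≤ b * (β - 1) := mul_nonneg hb.le hβ1.le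
      have t1 := mul_le_mul_of_nonneg_left hsq hb1
      have t2 : b * β - d - c * (x s + y s + w s) ≤ -(c * (ε / 2)) := by
        have h3 := mul_le_mul_of_nonneg_left hge hc.le
        rw [mul_add, hζc] at h3
        linarith
      have t3 := mul_le_mul_of_nonneg_right t2 (sq_nonneg (x s + y s + w s))
      have t4 : c * (ε / 2) * m * (x s + y s + w s)
          ≤ c * (ε / 2) * (x s + y s + w s) ^ 2 := by
        have h5 : c * (ε / 2) * m ≤ c * (ε / 2) * (x s + y s + w s) :=
          mul_le_mul_of_nonneg_left (hNm s hs) (mul_nonneg hc.le hε2.le)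
        calc c * (ε / 2) * m * (x s + y s + w s)
            ≤ c * (ε / 2) * (x s + y s + w s) * (x s + y s + w s) :=
              mul_le_mul_of_nonneg_right h5 hNpos.le
          _ = c * (ε / 2) * (x s + y s + w s) ^ 2 := by ring
      nlinarith [t1, t3, t4]
    obtain ⟨ta, hta0, hta⟩ := cross_neg
      (fun t => x t + y t + w t - ((b * β - d) / c + ε / 2))
      (fun t => ((b - d - c * (x t + y t + w t)) * (x t + y t + w t) ^ 2
          + b * (β - 1) * ((x t + y t) ^ 2 + (w t) ^ 2)) / (x t + y t + w t))
      0 (c * (ε / 2) * m) (by exact mul_pos (mul_pos hc hε2) hm)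
      (fun t ht => (S.hasDerivAt_N ht).sub_const _)
      (fun t ht hge => by
        have hge' : 0 ≤ x t + y t + w t - ((b * β - d) / c + ε / 2) := hge
        exact key_up t ht (by linarith))
    have hta' : x ta + y ta + w ta - ((b * β - d) / c + ε / 2) < 0 := hta
    have hstayU := stay_nonneg
      (fun t => ((b * β - d) / c + ε / 2) - (x t + y t + w t))
      (fun t => -(((b - d - c * (x t + y t + w t)) * (x t + y t + w t) ^ 2
          + b * (β - 1) * ((x t + y t) ^ 2 + (w t) ^ 2)) / (x t + y t + w t)))
      ta
      (fun t ht => (S.hasDerivAt_N (le_trans hta0 ht)).const_sub _)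
      (fun t ht heq => by
        have heq' : ((b * β - d) / c + ε / 2) - (x t + y t + w t) = 0 := heq
        have h6 := key_up t (le_trans hta0 ht) (by linarith)
        have h7 : 0 < c * (ε / 2) * m := mul_pos (mul_pos hc hε2) hm
        show 0 < -(((b - d - c * (x t + y t + w t)) * (x t + y t + w t) ^ 2
          + b * (β - 1) * ((x t + y t) ^ 2 + (w t) ^ 2)) / (x t + y t + w t))
        linarith)
      (by
        show 0 ≤ ((b * β - d) / c + ε / 2) - (x ta + y ta + w ta)
        linarith)
    -- lower trap
    set η := c * ε * m ^ 2 / (8 * b * (β - 1) * M) with hηdef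
    have hη : 0 < η := by
      rw [hηdef]
      exact div_pos (mul_pos (mul_pos hc hε) (pow_pos hm 2))
        (mul_pos (mul_pos (mul_pos (by norm_num : (0:ℝ) < 8) hb) hβ1) hM)
    have hηM : 2 * (b * (β - 1)) * η * M = c * ε * m ^ 2 / 4 := by
      rw [hηdef]
      field_simp
      ring
    clear_value η
    obtain ⟨T0, hT0⟩ := eventually_atTop.1 (hw0'.eventually (gt_mem_nhds hη))
    set T1 := max T0 0 with hT1def
    have hT10 : (0:ℝ) ≤ T1 := le_max_right T0 0
    have hT1T0 : T0 ≤ T1 := le_max_left T0 0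
    clear_value T1
    set ρl := c * (ε / 2) * m ^ 2 / (2 * M) with hρldef
    have hρl : 0 < ρl := by
      rw [hρldef]
      exact div_pos (mul_pos (mul_pos hc hε2) (pow_pos hm 2)) (by linarith)
    have hρlM : ρl * M = c * (ε / 2) * m ^ 2 / 2 := by
      rw [hρldef]; field_simp
    clear_value ρl
    have key_lo : ∀ s, T1 ≤ s → x s + y s + w s ≤ (b * β - d) / c - ε / 2 →
        ρl ≤ ((b - d - c * (x s + y s + w s)) * (x s + y s + w s) ^ 2
          + b * (β - 1) * ((x s + y s) ^ 2 + (w s) ^ 2)) / (x s + y s + w s) := by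
      intro s hsT hle
      have hs : 0 ≤ s := le_trans hT10 hsT
      have hNpos := S.posN hs
      have hws : w s < η := hT0 s (le_trans hT1T0 hsT)
      rw [le_div_iff₀ hNpos]
      have hiden : (b - d - c * (x s + y s + w s)) * (x s + y s + w s) ^ 2
          + b * (β - 1) * ((x s + y s) ^ 2 + (w s) ^ 2)
          = (b * β - d - c * (x s + y s + w s)) * (x s + y s + w s) ^ 2
            - 2 * (b * (β - 1)) * (w s * (x s + y s)) := by ring
      have t2 : c * (ε / 2) ≤ b * β - d - c * (x s + y s + w s) := by
        have h3 := mul_le_mul_of_nonneg_left hle hc.le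
        rw [mul_sub, hζc] at h3
        linarith
      have t3 : c * (ε / 2) * m ^ 2 ≤ (b * β - d - c * (x s + y s + w s))
          * (x s + y s + w s) ^ 2 := by
        have hm2 : m ^ 2 ≤ (x s + y s + w s) ^ 2 := pow_le_pow_left₀ hm.le (hNm s hs) 2
        calc c * (ε / 2) * m ^ 2 ≤ c * (ε / 2) * (x s + y s + w s) ^ 2 :=
              mul_le_mul_of_nonneg_left hm2 (mul_nonneg hc.le hε2.le)
          _ ≤ _ := mul_le_mul_of_nonneg_right t2 (sq_nonneg _)
      have t4 : 2 * (b * (β - 1)) * (w s * (x s + y s)) ≤ c * ε * m ^ 2 / 4 := by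
        rw [← hηM]
        have hxy : x s + y s ≤ M := by linarith [hNM s hs, S.posw hs]
        have h8 : w s * (x s + y s) ≤ η * M := by
          apply mul_le_mul hws.le hxy (by linarith [S.posx hs, S.posy hs]) hη.le
        have h9 : 0 ≤ 2 * (b * (β - 1)) := by linarith [mul_pos hb hβ1]
        calc 2 * (b * (β - 1)) * (w s * (x s + y s)) ≤ 2 * (b * (β - 1)) * (η * M) :=
              mul_le_mul_of_nonneg_left h8 h9
          _ = 2 * (b * (β - 1)) * η * M := by ring
      have t5 : ρl * (x s + y s + w s) ≤ c * (ε / 2) * m ^ 2 / 2 := by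
        have h10 : ρl * (x s + y s + w s) ≤ ρl * M :=
          mul_le_mul_of_nonneg_left (hNM s hs) hρl.le
        linarith [hρlM]
      rw [hiden]
      linarith
    obtain ⟨tb, htb1, htb⟩ := cross_neg
      (fun t => ((b * β - d) / c - ε / 2) - (x t + y t + w t))
      (fun t => -(((b - d - c * (x t + y t + w t)) * (x t + y t + w t) ^ 2
          + b * (β - 1) * ((x t + y t) ^ 2 + (w t) ^ 2)) / (x t + y t + w t)))
      T1 ρl hρl
      (fun t ht => (S.hasDerivAt_N (le_trans hT10 ht)).const_sub _)
      (fun t ht hge => by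
        have hge' : 0 ≤ ((b * β - d) / c - ε / 2) - (x t + y t + w t) := hge
        have := key_lo t ht (by linarith)
        linarith)
    have htb' : ((b * β - d) / c - ε / 2) - (x tb + y tb + w tb) < 0 := htb
    have hstayL := stay_nonneg
      (fun t => (x t + y t + w t) - ((b * β - d) / c - ε / 2))
      (fun t => ((b - d - c * (x t + y t + w t)) * (x t + y t + w t) ^ 2
          + b * (β - 1) * ((x t + y t) ^ 2 + (w t) ^ 2)) / (x t + y t + w t))
      tb
      (fun t ht => (S.hasDerivAt_N
        (le_trans (le_trans hT10 htb1) ht)).sub_const _)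
      (fun t ht heq => by
        have heq' : (x t + y t + w t) - ((b * β - d) / c - ε / 2) = 0 := heq
        have := key_lo t (le_trans htb1 ht) (by linarith)
        show 0 < ((b - d - c * (x t + y t + w t)) * (x t + y t + w t) ^ 2
          + b * (β - 1) * ((x t + y t) ^ 2 + (w t) ^ 2)) / (x t + y t + w t)
        linarith)
      (by
        show 0 ≤ (x tb + y tb + w tb) - ((b * β - d) / c - ε / 2)
        linarith)
    refine ⟨max ta tb, fun t ht => ?_⟩
    have h1 : 0 ≤ ((b * β - d) / c + ε / 2) - (x t + y t + w t) :=
      hstayU t (le_trans (le_max_left ta tb) ht)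
    have h2 : 0 ≤ (x t + y t + w t) - ((b * β - d) / c - ε / 2) :=
      hstayL t (le_trans (le_max_right ta tb) ht)
    rw [Real.dist_eq]
    have habs : |x t + y t + w t - (b * β - d) / c| ≤ ε / 2 := by
      rw [abs_le]; constructor <;> linarith
    linarith [habs]
  -- conclude
  have hxζ : Tendsto x atTop (𝓝 ((b * β - d) / c)) := by
    have h := (hNζ.sub hy0').sub hw0'
    rw [sub_zero, sub_zero] at h
    exact h.congr (fun t => by ring)
  exact hxζ.prodMk_nhds (hy0'.prodMk_nhds hw0')
end

section
/- Along any solution (x, y, w) of the one-patch DOM system with positive coordinates, the identities (d/dt)N(t) = (bβ − d − cN(t))N(t) − 2b(β − 1)(x(t) + y(t))w(t)/N(t) and (d/dt)(x(t) − w(t)) = (x(t) − w(t))(bβ − d − cN(t)) + b(β − 1)y(t)w(t)/N(t) hold, where N = x + y + w. Consequently the set {x ≥ w} (intersected with the open positive octant) is invariant under the flow of the system. -/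
/-- Along any solution (x, y, w) of the one-patch DOM system with positive
coordinates, (d/dt)N = (bβ − d − cN)N − 2b(β − 1)(x + y)w/N and
(d/dt)(x − w) = (x − w)(bβ − d − cN) + b(β − 1)yw/N, where N = x + y + w.
Consequently the set {x ≥ w} (in the open positive octant) is invariant under the flow. -/
theorem dom_one_patch_identities_and_invariance (b d c β : ℝ)
    (hdb : d < b) (hd : 0 < d) (hc : 0 < c) (hβ : 1 < β) (x y w : ℝ → ℝ)
    (hpos : ∀ t : ℝ, 0 ≤ t → 0 < x t ∧ 0 < y t ∧ 0 < w t)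
    (hx : ∀ t : ℝ, 0 ≤ t → HasDerivAt x
      (b * β / (x t + y t + w t) * (x t + y t / 2) ^ 2
        - (d + c * (x t + y t + w t)) * x t) t)
    (hy : ∀ t : ℝ, 0 ≤ t → HasDerivAt y
      (b / (x t + y t + w t) * (β * y t + 2 * w t) * (x t + y t / 2)
        - (d + c * (x t + y t + w t)) * y t) t)
    (hw : ∀ t : ℝ, 0 ≤ t → HasDerivAt w
      (b / (x t + y t + w t) * (β * (w t) ^ 2 + w t * y t + (β / 4) * (y t) ^ 2)
        - (d + c * (x t + y t + w t)) * w t) t) :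
    (∀ t : ℝ, 0 ≤ t → HasDerivAt (fun s => x s + y s + w s)
      ((b * β - d - c * (x t + y t + w t)) * (x t + y t + w t)
        - 2 * b * (β - 1) * (x t + y t) * w t / (x t + y t + w t)) t) ∧
    (∀ t : ℝ, 0 ≤ t → HasDerivAt (fun s => x s - w s)
      ((x t - w t) * (b * β - d - c * (x t + y t + w t))
        + b * (β - 1) * y t * w t / (x t + y t + w t)) t) ∧
    (∀ s : ℝ, 0 ≤ s → w s ≤ x s → ∀ t : ℝ, s ≤ t → w t ≤ x t) := by
  have hN : ∀ t : ℝ, 0 ≤ t → 0 < x t + y t + w t := by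
    intro t ht
    obtain ⟨h1, h2, h3⟩ := hpos t ht
    linarith
  -- derivative of N
  have hNder : ∀ t : ℝ, 0 ≤ t → HasDerivAt (fun s => x s + y s + w s)
      ((b * β - d - c * (x t + y t + w t)) * (x t + y t + w t)
        - 2 * b * (β - 1) * (x t + y t) * w t / (x t + y t + w t)) t := by
    intro t ht
    have hNt := (hN t ht).ne'
    have h := ((hx t ht).add (hy t ht)).add (hw t ht)
    refine h.congr_deriv ?_
    field_simp
    ring
  -- derivative of x - w
  have hU : ∀ t : ℝ, 0 ≤ t → HasDerivAt (fun s => x s - w s)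
      ((x t - w t) * (b * β - d - c * (x t + y t + w t))
        + b * (β - 1) * y t * w t / (x t + y t + w t)) t := by
    intro t ht
    have hNt := (hN t ht).ne'
    have h := (hx t ht).sub (hw t ht)
    refine h.congr_deriv ?_
    field_simp
    ring
  refine ⟨hNder, hU, ?_⟩
  -- invariance
  intro s hs hws t hst
  by_contra hcon
  push_neg at hcon
  set u : ℝ → ℝ := fun r => w r - x r with hu_def
  set g : ℝ → ℝ := fun r =>
    (w r - x r) * (b * β - d - c * (x r + y r + w r))
      - b * (β - 1) * y r * w r / (x r + y r + w r) with hg_def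
  have hu' : ∀ r : ℝ, 0 ≤ r → HasDerivAt u (g r) r := by
    intro r hr
    have hNr := (hN r hr).ne'
    have h := (hw r hr).sub (hx r hr)
    have h2 : HasDerivAt (fun s => w s - x s) (g r) r := by
      refine h.congr_deriv ?_
      simp only [hg_def]
      field_simp
      ring
    exact h2
  have hut : 0 < u t := by simp [hu_def]; linarith
  have hus : u s ≤ 0 := by simp [hu_def]; linarith
  have hslt : s < t := lt_of_le_of_ne hst (by rintro rfl; linarith)
  have hcontu : ∀ r : ℝ, 0 ≤ r → ContinuousAt u r := fun r hr => (hu' r hr).continuousAt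
  have hcontOn : ContinuousOn u (Set.Icc s t) := fun r hr =>
    (hcontu r (le_trans hs hr.1)).continuousWithinAt
  set S : Set ℝ := Set.Icc s t ∩ u ⁻¹' Set.Iic 0 with hS_def
  have hSne : S.Nonempty := ⟨s, ⟨le_refl s, le_of_lt hslt⟩, hus⟩
  have hSbdd : BddAbove S := ⟨t, fun r hr => hr.1.2⟩
  have hSclosed : IsClosed S :=
    hcontOn.preimage_isClosed_of_isClosed isClosed_Icc isClosed_Iic
  set τ := sSup S with hτ_def
  have hτS : τ ∈ S := hSclosed.csSup_mem hSne hSbdd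
  have hsτ : s ≤ τ := hτS.1.1
  have hτt : τ ≤ t := hτS.1.2
  have huτ : u τ ≤ 0 := hτS.2
  have hτ0 : 0 ≤ τ := le_trans hs hsτ
  have hτlt : τ < t := lt_of_le_of_ne hτt (fun h => by rw [h] at huτ; linarith)
  have hpos' : ∀ r ∈ Set.Ioc τ t, 0 < u r := by
    intro r hr
    by_contra h
    push_neg at h
    have : r ∈ S := ⟨⟨le_trans hsτ hr.1.le, hr.2⟩, h⟩
    exact absurd (le_csSup hSbdd this) (not_le.mpr hr.1)
  have huτ0 : u τ = 0 := by
    refine le_antisymm huτ ?_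
    have hct : Filter.Tendsto u (nhdsWithin τ (Set.Ioi τ)) (nhds (u τ)) :=
      ((hcontu τ hτ0).continuousWithinAt)
    refine ge_of_tendsto hct ?_
    filter_upwards [Ioo_mem_nhdsGT_of_mem ⟨le_refl τ, hτlt⟩] with r hr
    exact (hpos' r ⟨hr.1, hr.2.le⟩).le
  -- Gronwall hypotheses
  have hcont' : ContinuousOn u (Set.Icc τ t) := fun r hr =>
    (hcontu r (le_trans hτ0 hr.1)).continuousWithinAt
  have hf' : ∀ r ∈ Set.Ico τ t, ∀ ρ : ℝ, g r < ρ →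
      ∃ᶠ z in nhdsWithin r (Set.Ioi r), (z - r)⁻¹ * (u z - u r) < ρ := by
    intro r hr ρ hρ
    have hder := hu' r (le_trans hτ0 hr.1)
    have htend : Filter.Tendsto (fun z => (z - r)⁻¹ * (u z - u r))
        (nhdsWithin r (Set.Ioi r)) (nhds (g r)) := by
      have h1 := hasDerivAt_iff_tendsto_slope.mp hder
      have hsub : Set.Ioi r ⊆ {r}ᶜ := fun z hz => ne_of_gt hz
      have h2 := h1.mono_left (nhdsWithin_mono r hsub)
      refine h2.congr fun z => ?_
      rw [slope_def_field]
      ring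
    exact (htend.eventually (eventually_lt_nhds hρ)).frequently
  have hbound : ∀ r ∈ Set.Ico τ t, g r ≤ (b * β - d) * u r + 0 := by
    intro r hr
    have hr0 : 0 ≤ r := le_trans hτ0 hr.1
    obtain ⟨hx0, hy0, hw0⟩ := hpos r hr0
    have hNr := hN r hr0
    have hur : 0 ≤ u r := by
      rcases eq_or_lt_of_le hr.1 with h | h
      · rw [← h, huτ0]
      · exact (hpos' r ⟨h, hr.2.le⟩).le
    have hur' : 0 ≤ w r - x r := hur
    have hgle : b * β - d - c * (x r + y r + w r) ≤ b * β - d := by nlinarith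
    have hb : 0 < b := lt_trans hd hdb
    have hdivpos : 0 < b * (β - 1) * y r * w r / (x r + y r + w r) :=
      div_pos (mul_pos (mul_pos (mul_pos hb (by linarith)) hy0) hw0) hNr
    calc g r ≤ (w r - x r) * (b * β - d) := by
          have h1 : (w r - x r) * (b * β - d - c * (x r + y r + w r))
              ≤ (w r - x r) * (b * β - d) := mul_le_mul_of_nonneg_left hgle hur'
          simp only [hg_def]
          linarith
      _ = (b * β - d) * u r + 0 := by simp only [hu_def]; ring
  have key := le_gronwallBound_of_liminf_deriv_right_le hcont' hf' (le_of_eq huτ0) hbound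
    t ⟨hτlt.le, le_refl t⟩
  rw [gronwallBound_ε0_δ0] at key
  linarith
end

section
/- Let A, E, F be positive real numbers with AE > 2F. Then every complex root of the polynomial X³ + AX² + EX + F has negative real part. -/
/-- Let A, E, F be positive real numbers with AE > 2F. Then every complex
root of X³ + AX² + EX + F has negative real part. -/
theorem cubic_routh_hurwitz (A E F : ℝ) (hA : 0 < A) (hE : 0 < E) (hF : 0 < F)
    (h : 2 * F < A * E) :
    ∀ z : ℂ, z ^ 3 + (A : ℂ) * z ^ 2 + (E : ℂ) * z + (F : ℂ) = 0 → z.re < 0 := by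
  intro z hz
  by_contra hx
  push_neg at hx
  set x := z.re with hxdef
  set y := z.im with hydef
  rw [show z ^ 3 = z * z * z by ring, show z ^ 2 = z * z by ring] at hz
  have h1 : x * x * x - 3 * x * y * y + A * (x * x - y * y) + E * x + F = 0 := by
    have := congrArg Complex.re hz
    simp [Complex.mul_re, Complex.mul_im] at this
    linarith [this]
  have h2 : y * (3 * x * x + 2 * A * x + E - y * y) = 0 := by
    have := congrArg Complex.im hz
    simp [Complex.mul_re, Complex.mul_im] at this
    nlinarith [this]
  rcases mul_eq_zero.mp h2 with hy | hy
  · rw [hy] at h1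
    nlinarith [h1, mul_pos hA hE, mul_nonneg hx hx, mul_nonneg (mul_nonneg hx hx) hx]
  · have hyy : y * y = 3 * x * x + 2 * A * x + E := by linarith
    rw [hyy] at h1
    nlinarith [h1, mul_nonneg hx hx, mul_nonneg (mul_nonneg hx hx) hx,
      mul_nonneg hA.le hx, mul_nonneg hE.le hx, mul_nonneg (mul_nonneg hA.le hA.le) hx]
end

section
/- Let b > 0, β > 1, p > 0, and set A = b(3β − 1) + 3p, E = b²β(3β − 2) + 2bp(3β − 1) + 2p², F = b³β²(β − 1) + b²βp(3β − 2) + 2bp²(β − 1). Then AE − 2F = b³β(2 + 7β(β − 1)) + b²(2 + 7β(3β − 2))p + 4b(5β − 1)p² + 6p³ > 0, and every complex root of the polynomial X³ + AX² + EX + F has negative real part. -/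
/-- Routh–Hurwitz for a cubic, single-root version. -/
lemma cubic_hurwitz (A E F : ℝ) (hA : 0 < A) (hE : 0 < E) (hF : 0 < F)
    (hAEF : F < A * E) (z : ℂ)
    (h : z ^ 3 + (A : ℂ) * z ^ 2 + (E : ℂ) * z + (F : ℂ) = 0) : z.re < 0 := by
  set x := z.re with hx
  set y := z.im with hy
  have hzxy : z = (x : ℂ) + (y : ℂ) * Complex.I := (Complex.re_add_im z).symm
  rw [hzxy] at h
  have hre := congrArg Complex.re h
  have him := congrArg Complex.im h
  simp [Complex.add_re, Complex.add_im, Complex.mul_re, Complex.mul_im, pow_succ] at hre him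
  by_contra hc
  push_neg at hc
  rcases eq_or_ne y 0 with h0 | h0
  · rw [h0] at hre
    nlinarith [pow_pos hA 2, sq_nonneg x, mul_pos hA hE]
  · have hy2 : y ^ 2 = 3 * x ^ 2 + 2 * A * x + E := by
      have h2 : y * (3 * x ^ 2 - y ^ 2 + 2 * A * x + E) = 0 := by nlinarith [him]
      have := (mul_eq_zero.mp h2).resolve_left h0
      nlinarith [this]
    nlinarith [hre, hy2, sq_nonneg x, sq_nonneg y, mul_pos hA hE, sq_nonneg A,
      mul_nonneg hc hc, mul_nonneg (mul_nonneg hc hc) hc, mul_pos hA hA,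
      mul_nonneg (mul_pos hA hA).le hc, mul_nonneg hE.le hc, mul_nonneg (mul_pos hA hE).le hc]

/-- For b > 0, β > 1, p > 0 and A = b(3β − 1) + 3p,
E = b²β(3β − 2) + 2bp(3β − 1) + 2p², F = b³β²(β − 1) + b²βp(3β − 2) + 2bp²(β − 1), one has
AE − 2F = b³β(2 + 7β(β − 1)) + b²(2 + 7β(3β − 2))p + 4b(5β − 1)p² + 6p³ > 0, and every
complex root of X³ + AX² + EX + F has negative real part. -/
theorem dom_differentiated_cubic_roots (b β p : ℝ) (hb : 0 < b) (hβ : 1 < β) (hp : 0 < p) :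
    (b * (3 * β - 1) + 3 * p)
        * (b ^ 2 * β * (3 * β - 2) + 2 * b * p * (3 * β - 1) + 2 * p ^ 2)
      - 2 * (b ^ 3 * β ^ 2 * (β - 1) + b ^ 2 * β * p * (3 * β - 2)
          + 2 * b * p ^ 2 * (β - 1))
      = b ^ 3 * β * (2 + 7 * β * (β - 1)) + b ^ 2 * (2 + 7 * β * (3 * β - 2)) * p
          + 4 * b * (5 * β - 1) * p ^ 2 + 6 * p ^ 3 ∧
    0 < b ^ 3 * β * (2 + 7 * β * (β - 1)) + b ^ 2 * (2 + 7 * β * (3 * β - 2)) * p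
          + 4 * b * (5 * β - 1) * p ^ 2 + 6 * p ^ 3 ∧
    (∀ z : ℂ, z ^ 3 + ((b * (3 * β - 1) + 3 * p : ℝ) : ℂ) * z ^ 2
        + ((b ^ 2 * β * (3 * β - 2) + 2 * b * p * (3 * β - 1) + 2 * p ^ 2 : ℝ) : ℂ) * z
        + ((b ^ 3 * β ^ 2 * (β - 1) + b ^ 2 * β * p * (3 * β - 2)
            + 2 * b * p ^ 2 * (β - 1) : ℝ) : ℂ) = 0 → z.re < 0) := by
  have hb2 : 0 < b ^ 2 := pow_pos hb 2
  have hb3 : 0 < b ^ 3 := pow_pos hb 3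
  have hβ0 : 0 < β := lt_trans one_pos hβ
  have heq : (b * (3 * β - 1) + 3 * p)
        * (b ^ 2 * β * (3 * β - 2) + 2 * b * p * (3 * β - 1) + 2 * p ^ 2)
      - 2 * (b ^ 3 * β ^ 2 * (β - 1) + b ^ 2 * β * p * (3 * β - 2)
          + 2 * b * p ^ 2 * (β - 1))
      = b ^ 3 * β * (2 + 7 * β * (β - 1)) + b ^ 2 * (2 + 7 * β * (3 * β - 2)) * p
          + 4 * b * (5 * β - 1) * p ^ 2 + 6 * p ^ 3 := by ring
  have h1 : 0 < 2 + 7 * β * (β - 1) := by nlinarith [sq_nonneg (2 * β - 1)]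
  have h2 : 0 < 2 + 7 * β * (3 * β - 2) := by nlinarith
  have h3 : 0 < 5 * β - 1 := by nlinarith
  have hpos : 0 < b ^ 3 * β * (2 + 7 * β * (β - 1)) + b ^ 2 * (2 + 7 * β * (3 * β - 2)) * p
          + 4 * b * (5 * β - 1) * p ^ 2 + 6 * p ^ 3 := by
    have t1 := mul_pos (mul_pos hb3 hβ0) h1
    have t2 := mul_pos (mul_pos hb2 h2) hp
    have t3 := mul_pos (mul_pos hb h3) (pow_pos hp 2)
    have t4 := pow_pos hp 3
    nlinarith [t1, t2, t3, t4]
  refine ⟨heq, hpos, fun z hz => ?_⟩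
  have h4 : 0 < 3 * β - 2 := by linarith
  have h5 : 0 < 3 * β - 1 := by linarith
  have h6 : 0 < β - 1 := by linarith
  have hA : 0 < b * (3 * β - 1) + 3 * p := by
    have := mul_pos hb h5
    linarith
  have hE : 0 < b ^ 2 * β * (3 * β - 2) + 2 * b * p * (3 * β - 1) + 2 * p ^ 2 := by
    have t1 := mul_pos (mul_pos hb2 hβ0) h4
    have t2 := mul_pos (mul_pos hb hp) h5
    have t3 := pow_pos hp 2
    linarith
  have hF : 0 < b ^ 3 * β ^ 2 * (β - 1) + b ^ 2 * β * p * (3 * β - 2)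
      + 2 * b * p ^ 2 * (β - 1) := by
    have t1 := mul_pos (mul_pos hb3 (pow_pos hβ0 2)) h6
    have t2 := mul_pos (mul_pos (mul_pos hb2 hβ0) hp) h4
    have t3 := mul_pos (mul_pos hb (pow_pos hp 2)) h6
    linarith
  have hAEF : b ^ 3 * β ^ 2 * (β - 1) + b ^ 2 * β * p * (3 * β - 2)
      + 2 * b * p ^ 2 * (β - 1)
      < (b * (3 * β - 1) + 3 * p)
        * (b ^ 2 * β * (3 * β - 2) + 2 * b * p * (3 * β - 1) + 2 * p ^ 2) := by
    linarith [heq, hpos, hF]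
  exact cubic_hurwitz _ _ _ hA hE hF hAEF z hz
end

section
/- Let b > d > 0, c > 0, β ≥ 1, p ≥ 0, and let z₁, z₂ be positive real numbers satisfying 0 = (bβ − (d + c z₁))z₁ + p(z₂ − z₁) and 0 = (bβ − (d + c z₂))z₂ + p(z₁ − z₂). Then z₁ = z₂ = (bβ − d)/c. -/
/-- Let b > d > 0, c > 0, β ≥ 1, p ≥ 0, and let z₁, z₂ > 0 satisfy
0 = (bβ − (d + cz₁))z₁ + p(z₂ − z₁) and 0 = (bβ − (d + cz₂))z₂ + p(z₁ − z₂).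
Then z₁ = z₂ = (bβ − d)/c. -/
theorem monomorphic_two_patch_equilibrium (b d c β p z₁ z₂ : ℝ)
    (hdb : d < b) (hd : 0 < d) (hc : 0 < c) (hβ : 1 ≤ β) (hp : 0 ≤ p)
    (hz₁ : 0 < z₁) (hz₂ : 0 < z₂)
    (heq1 : 0 = (b * β - (d + c * z₁)) * z₁ + p * (z₂ - z₁))
    (heq2 : 0 = (b * β - (d + c * z₂)) * z₂ + p * (z₁ - z₂)) :
    z₁ = (b * β - d) / c ∧ z₂ = (b * β - d) / c := by
  have hsub : (z₁ - z₂) * (b * β - d - c * (z₁ + z₂) - 2 * p) = 0 := by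
    linear_combination heq2 - heq1
  have hzz : z₁ = z₂ := by
    by_contra hne
    have hk : b * β - d - c * (z₁ + z₂) - 2 * p = 0 :=
      (mul_eq_zero.mp hsub).resolve_left (sub_ne_zero.mpr hne)
    nlinarith [mul_pos hz₁ hz₂, mul_pos hc (mul_pos hz₁ hz₂), mul_pos hz₁ hz₂]
  subst hzz
  have hz : z₁ = (b * β - d) / c := by
    field_simp
    nlinarith [heq1]
  exact ⟨hz, hz⟩
end
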